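/- arXiv:1107.2240 — 2 statements merged into one kernel-verified Lean document; each statement's English description precedes it below -/
import Mathlib

section
/- Let Ω be the path algebra of the quiver with vertices 1,…,p and arrows x_s: s+1 → s, y_s: s → s+1 (for 1 ≤ s ≤ p−1), modulo the relations x₁y₁ = 0 and xy = yx (i.e. x_s y_s = y_{s−1} x_{s−1} for 2 ≤ s ≤ p−1). Then the centre of Ω is isomorphic to F[z]/(z^p), where z = xy = Σ_s y_{s−1}x_{s−1} + x_s y_s interpreted appropriately (the sum of all length-2 cycles). -/
/-!
STATEMENT 6: Let `Ω` be the path algebra of the quiver with vertices `1, …, p` and arrows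
`x_s : s+1 → s`, `y_s : s → s+1` modulo the relations `x₁y₁ = 0` and `xy = yx`.
Then the centre of `Ω` is `F[z]/(z^p)` where `z = xy` is the sum of all length-two cycles:
the algebra map `F[T] → Ω, T ↦ z` has image the centre of `Ω` and kernel `(T^p)`.

We present `Ω` by generators and relations (using `p = m + 3`, so that `p > 2`;
vertices are `Fin (m+3)`, arrow indices are `t : Fin (m+2)`, the arrow `x t` running from
vertex `t.succ` to vertex `t.castSucc` and `y t` the other way).  Products are written in
function-composition order: in `a * b` the path `b` is traversed first, and an arrow
`α : u → v` satisfies `e_v * α * e_u = α`.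
-/

namespace Stmt6

inductive OGen (m : ℕ) : Type
  | e : Fin (m + 3) → OGen m
  | x : Fin (m + 2) → OGen m
  | y : Fin (m + 2) → OGen m

variable (F : Type) [Field F] (m : ℕ)

open FreeAlgebra

abbrev fE (i : Fin (m + 3)) : FreeAlgebra F (OGen m) := ι F (OGen.e i)
abbrev fX (t : Fin (m + 2)) : FreeAlgebra F (OGen m) := ι F (OGen.x t)
abbrev fY (t : Fin (m + 2)) : FreeAlgebra F (OGen m) := ι F (OGen.y t)

/-- The defining relations of `Ω`. -/
inductive OmegaRel : FreeAlgebra F (OGen m) → FreeAlgebra F (OGen m) → Prop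
  /-- the vertex idempotents are orthogonal idempotents -/
  | ee (i j : Fin (m + 3)) :
      OmegaRel (fE F m i * fE F m j) (if i = j then fE F m i else 0)
  /-- the vertex idempotents sum to `1` -/
  | esum : OmegaRel (∑ i : Fin (m + 3), fE F m i) 1
  /-- `x t` is an arrow from vertex `t.succ` to vertex `t.castSucc` -/
  | ex (t : Fin (m + 2)) : OmegaRel (fE F m t.castSucc * fX F m t * fE F m t.succ) (fX F m t)
  /-- `y t` is an arrow from vertex `t.castSucc` to vertex `t.succ` -/
  | ey (t : Fin (m + 2)) : OmegaRel (fE F m t.succ * fY F m t * fE F m t.castSucc) (fY F m t)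
  /-- the relation `x₁ y₁ = 0` (the length-two loop at the first vertex vanishes) -/
  | xy1 : OmegaRel (fX F m 0 * fY F m 0) 0
  /-- the commutation relations `xy = yx` -/
  | comm (t : Fin (m + 1)) :
      OmegaRel (fY F m t.castSucc * fX F m t.castSucc) (fX F m t.succ * fY F m t.succ)

/-- The algebra `Ω`. -/
abbrev Omega := RingQuot (OmegaRel F m)

noncomputable def mkO : FreeAlgebra F (OGen m) →ₐ[F] Omega F m := RingQuot.mkAlgHom F _

noncomputable def eΩ (i : Fin (m + 3)) : Omega F m := mkO F m (fE F m i)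
noncomputable def xΩ (t : Fin (m + 2)) : Omega F m := mkO F m (fX F m t)
noncomputable def yΩ (t : Fin (m + 2)) : Omega F m := mkO F m (fY F m t)

/-- `z = xy`, the sum of all length-two cycles (one based at each vertex; the loop at the
first vertex, which is zero, is omitted from the sum). -/
noncomputable def zΩ : Omega F m := ∑ t : Fin (m + 2), yΩ F m t * xΩ F m t

end Stmt6

namespace Stmt6Proof
open Stmt6
open Fin.NatCast

variable (F : Type) [Field F] (m : ℕ)

abbrev V (m : ℕ) := Fin (m + 3) × ℕ
abbrev W (F : Type) [Field F] (m : ℕ) := V m → F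

def pull (c : V m → Prop) [DecidablePred c] (σ : V m → V m) :
    Module.End F (W F m) where
  toFun f q := if c q then f (σ q) else 0
  map_add' f g := by funext q; by_cases h : c q <;> simp [h]
  map_smul' a f := by funext q; by_cases h : c q <;> simp [h]

@[simp] theorem pull_apply (c : V m → Prop) [DecidablePred c] (σ : V m → V m)
    (f : W F m) (q : V m) : pull F m c σ f q = if c q then f (σ q) else 0 := rfl

def Ee (i : Fin (m + 3)) : Module.End F (W F m) := pull F m (fun q => q.1 = i) id

def Xx (t : Fin (m + 2)) : Module.End F (W F m) :=
  pull F m (fun q => q.1 = t.castSucc ∧ q.2 ≤ (t : ℕ)) (fun q => (t.succ, q.2))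

def Yy (t : Fin (m + 2)) : Module.End F (W F m) :=
  pull F m (fun q => q.1 = t.succ ∧ 1 ≤ q.2) (fun q => (t.castSucc, q.2 - 1))

@[simp] theorem Ee_apply (i : Fin (m + 3)) (f : W F m) (q : V m) :
    Ee F m i f q = if q.1 = i then f q else 0 := rfl

@[simp] theorem Xx_apply (t : Fin (m + 2)) (f : W F m) (q : V m) :
    Xx F m t f q = if q.1 = t.castSucc ∧ q.2 ≤ (t : ℕ) then f (t.succ, q.2) else 0 := rfl

@[simp] theorem Yy_apply (t : Fin (m + 2)) (f : W F m) (q : V m) :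
    Yy F m t f q = if q.1 = t.succ ∧ 1 ≤ q.2 then f (t.castSucc, q.2 - 1) else 0 := rfl

noncomputable def rFree : FreeAlgebra F (OGen m) →ₐ[F] Module.End F (W F m) :=
  FreeAlgebra.lift F (fun g => match g with
    | .e i => Ee F m i | .x t => Xx F m t | .y t => Yy F m t)

@[simp] theorem rFree_e (i : Fin (m + 3)) : rFree F m (fE F m i) = Ee F m i := by
  simp [rFree, fE]
@[simp] theorem rFree_x (t : Fin (m + 2)) : rFree F m (fX F m t) = Xx F m t := by
  simp [rFree, fX]
@[simp] theorem rFree_y (t : Fin (m + 2)) : rFree F m (fY F m t) = Yy F m t := by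
  simp [rFree, fY]

theorem rRel : ∀ ⦃a b⦄, OmegaRel F m a b → rFree F m a = rFree F m b := by
  intro a b h
  induction h with
  | ee i j =>
      rcases eq_or_ne i j with rfl | hij
      · simp only [map_mul, rFree_e, if_pos rfl]
        ext f q
        simp only [Module.End.mul_apply, Ee_apply]
        split <;> simp_all
      · simp only [map_mul, rFree_e, if_neg hij, map_zero]
        ext f q
        simp only [Module.End.mul_apply, Ee_apply, LinearMap.zero_apply, Pi.zero_apply]
        split_ifs with h1 h2 <;> simp_all
  | esum =>
      rw [map_sum, map_one]
      ext f q
      rw [LinearMap.sum_apply]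
      simp only [rFree_e]
      rw [Finset.sum_apply]
      simp only [Ee_apply]
      rw [Finset.sum_ite_eq (Finset.univ : Finset (Fin (m+3))) q.1 (fun _ => f q)]
      simp
  | ex t =>
      simp only [map_mul, rFree_e, rFree_x]
      ext f q
      simp only [Module.End.mul_apply, Ee_apply, Xx_apply]
      by_cases h1 : q.1 = t.castSucc <;> by_cases h2 : q.2 ≤ (t : ℕ) <;> simp [h1, h2]
  | ey t =>
      simp only [map_mul, rFree_e, rFree_y]
      ext f q
      simp only [Module.End.mul_apply, Ee_apply, Yy_apply]
      by_cases h1 : q.1 = t.succ <;> by_cases h2 : 1 ≤ q.2 <;> simp [h1, h2]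
  | xy1 =>
      simp only [map_mul, rFree_x, rFree_y, map_zero]
      ext f q
      simp only [Module.End.mul_apply, Xx_apply, Yy_apply, LinearMap.zero_apply, Pi.zero_apply]
      by_cases h1 : q.1 = Fin.castSucc 0 ∧ q.2 ≤ ((0 : Fin (m+2)) : ℕ)
      · rw [if_pos h1, if_neg]
        rintro ⟨-, h2⟩
        have h3 := h1.2
        simp only [Fin.val_zero] at h3
        omega
      · rw [if_neg h1]
  | comm t =>
      simp only [map_mul, rFree_x, rFree_y]
      ext f q
      simp only [Module.End.mul_apply, Xx_apply, Yy_apply, Fin.succ_castSucc,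
        Fin.coe_castSucc, Fin.val_succ, and_true, true_and, if_true]
      by_cases h1 : q.1 = t.succ.castSucc
      · simp only [h1, true_and, if_pos rfl]
        split_ifs <;> first | rfl | omega
      · rw [if_neg (by tauto), if_neg (by tauto)]

noncomputable def rho : Omega F m →ₐ[F] Module.End F (W F m) :=
  RingQuot.liftAlgHom F ⟨rFree F m, rRel F m⟩

@[simp] theorem rho_mk (x : FreeAlgebra F (OGen m)) :
    rho F m (mkO F m x) = rFree F m x :=
  RingQuot.liftAlgHom_mkAlgHom_apply F (rFree F m) (rRel F m) x


/-! ### ℕ-indexed generators of Ω and the defining relations -/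

noncomputable def en (i : ℕ) : Omega F m := eΩ F m (i : Fin (m+3))
noncomputable def xn (t : ℕ) : Omega F m := xΩ F m (t : Fin (m+2))
noncomputable def yn (t : ℕ) : Omega F m := yΩ F m (t : Fin (m+2))

theorem heF (i j : Fin (m+3)) :
    eΩ F m i * eΩ F m j = if i = j then eΩ F m i else 0 := by
  have h := RingQuot.mkAlgHom_rel F (OmegaRel.ee (F:=F) (m:=m) i j)
  rw [map_mul] at h
  simp only [eΩ, mkO]
  rw [h, apply_ite (RingQuot.mkAlgHom F (OmegaRel F m)), map_zero]

theorem hsumF : ∑ i : Fin (m+3), eΩ F m i = 1 := by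
  have h := RingQuot.mkAlgHom_rel F (OmegaRel.esum (F:=F) (m:=m))
  rw [map_sum, map_one] at h
  simpa only [eΩ, mkO] using h

theorem hsandX (t : Fin (m+2)) :
    eΩ F m t.castSucc * xΩ F m t * eΩ F m t.succ = xΩ F m t := by
  have h := RingQuot.mkAlgHom_rel F (OmegaRel.ex (F:=F) (m:=m) t)
  rw [map_mul, map_mul] at h
  simpa only [eΩ, xΩ, mkO] using h

theorem hsandY (t : Fin (m+2)) :
    eΩ F m t.succ * yΩ F m t * eΩ F m t.castSucc = yΩ F m t := by
  have h := RingQuot.mkAlgHom_rel F (OmegaRel.ey (F:=F) (m:=m) t)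
  rw [map_mul, map_mul] at h
  simpa only [eΩ, yΩ, mkO] using h

theorem hEXF (i : Fin (m+3)) (t : Fin (m+2)) :
    eΩ F m i * xΩ F m t = if i = t.castSucc then xΩ F m t else 0 := by
  conv_lhs => rw [← hsandX F m t, ← mul_assoc, ← mul_assoc, heF]
  split_ifs with h
  · subst h; exact hsandX F m t
  · simp

theorem hXEF (i : Fin (m+3)) (t : Fin (m+2)) :
    xΩ F m t * eΩ F m i = if i = t.succ then xΩ F m t else 0 := by
  conv_lhs => rw [← hsandX F m t, mul_assoc, heF]
  rcases eq_or_ne i t.succ with rfl | h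
  · rw [if_pos rfl, if_pos rfl, hsandX]
  · rw [if_neg (fun hh => h hh.symm), mul_zero, if_neg h]

theorem hEYF (i : Fin (m+3)) (t : Fin (m+2)) :
    eΩ F m i * yΩ F m t = if i = t.succ then yΩ F m t else 0 := by
  conv_lhs => rw [← hsandY F m t, ← mul_assoc, ← mul_assoc, heF]
  split_ifs with h
  · subst h; exact hsandY F m t
  · simp

theorem hYEF (i : Fin (m+3)) (t : Fin (m+2)) :
    yΩ F m t * eΩ F m i = if i = t.castSucc then yΩ F m t else 0 := by
  conv_lhs => rw [← hsandY F m t, mul_assoc, heF]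
  rcases eq_or_ne i t.castSucc with rfl | h
  · rw [if_pos rfl, if_pos rfl, hsandY]
  · rw [if_neg (fun hh => h hh.symm), mul_zero, if_neg h]

/-! casts -/

theorem fv3 (i : ℕ) (h : i ≤ m+2) : ((i : Fin (m+3)) : ℕ) = i :=
  Fin.val_cast_of_lt (by omega)

theorem fv2 (t : ℕ) (h : t ≤ m+1) : ((t : Fin (m+2)) : ℕ) = t :=
  Fin.val_cast_of_lt (by omega)

theorem fcs (t : ℕ) (h : t ≤ m+1) :
    (t : Fin (m+2)).castSucc = (t : Fin (m+3)) := by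
  ext
  rw [Fin.coe_castSucc, fv2 m t h, fv3 m t (by omega)]

theorem fss (t : ℕ) (h : t ≤ m+1) :
    (t : Fin (m+2)).succ = ((t+1 : ℕ) : Fin (m+3)) := by
  ext
  rw [Fin.val_succ, fv2 m t h, fv3 m (t+1) (by omega)]

theorem f3inj {i j : ℕ} (hi : i ≤ m+2) (hj : j ≤ m+2) :
    (i : Fin (m+3)) = (j : Fin (m+3)) ↔ i = j := by
  constructor
  · intro h
    have := congrArg Fin.val h
    rwa [fv3 m i hi, fv3 m j hj] at this
  · rintro rfl; rfl

/-! ℕ-level relations -/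

theorem hEE {i j : ℕ} (hi : i ≤ m+2) (hj : j ≤ m+2) :
    en F m i * en F m j = if i = j then en F m i else 0 := by
  simp only [en]
  rw [heF]
  rw [if_congr (f3inj m hi hj) rfl rfl]

theorem hEX {i t : ℕ} (hi : i ≤ m+2) (ht : t ≤ m+1) :
    en F m i * xn F m t = if i = t then xn F m t else 0 := by
  simp only [en, xn]
  rw [hEXF, fcs m t ht, if_congr (f3inj m hi (by omega)) rfl rfl]

theorem hXE {i t : ℕ} (hi : i ≤ m+2) (ht : t ≤ m+1) :
    xn F m t * en F m i = if i = t+1 then xn F m t else 0 := by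
  simp only [en, xn]
  rw [hXEF, fss m t ht, if_congr (f3inj m hi (by omega)) rfl rfl]

theorem hEY {i t : ℕ} (hi : i ≤ m+2) (ht : t ≤ m+1) :
    en F m i * yn F m t = if i = t+1 then yn F m t else 0 := by
  simp only [en, yn]
  rw [hEYF, fss m t ht, if_congr (f3inj m hi (by omega)) rfl rfl]

theorem hYE {i t : ℕ} (hi : i ≤ m+2) (ht : t ≤ m+1) :
    yn F m t * en F m i = if i = t then yn F m t else 0 := by
  simp only [en, yn]
  rw [hYEF, fcs m t ht, if_congr (f3inj m hi (by omega)) rfl rfl]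

theorem hone : (1 : Omega F m) = ∑ i ∈ Finset.range (m+3), en F m i := by
  rw [← hsumF F m, ← Fin.sum_univ_eq_sum_range (fun i => en F m i) (m+3)]
  refine Finset.sum_congr rfl fun i _ => ?_
  simp only [en]
  rw [Fin.cast_val_eq_self]

theorem hXY0 : xn F m 0 * yn F m 0 = 0 := by
  have h := RingQuot.mkAlgHom_rel F (OmegaRel.xy1 (F:=F) (m:=m))
  rw [map_mul, map_zero] at h
  simp only [xn, yn, xΩ, yΩ, mkO, Nat.cast_zero]
  exact h

theorem fcs1 (t : ℕ) (h : t ≤ m) :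
    (t : Fin (m+1)).castSucc = (t : Fin (m+2)) := by
  ext
  rw [Fin.coe_castSucc, Fin.val_cast_of_lt (by omega : t < m+1),
    Fin.val_cast_of_lt (by omega : t < m+2)]

theorem fss1 (t : ℕ) (h : t ≤ m) :
    (t : Fin (m+1)).succ = ((t+1 : ℕ) : Fin (m+2)) := by
  ext
  rw [Fin.val_succ, Fin.val_cast_of_lt (by omega : t < m+1),
    Fin.val_cast_of_lt (by omega : t+1 < m+2)]

theorem hCOMM {t : ℕ} (ht : t ≤ m) :
    xn F m (t+1) * yn F m (t+1) = yn F m t * xn F m t := by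
  have h := RingQuot.mkAlgHom_rel F (OmegaRel.comm (F:=F) (m:=m) (t : Fin (m+1)))
  rw [map_mul, map_mul] at h
  simp only [xn, yn, xΩ, yΩ, mkO]
  rw [← fss1 m t ht, ← fcs1 m t ht]
  exact h.symm


/-! ### Path elements -/

noncomputable def Xd (w : ℕ) : ℕ → Omega F m
  | 0 => en F m w
  | d+1 => Xd w d * xn F m (w+d)

noncomputable def Yd (w : ℕ) : ℕ → Omega F m
  | 0 => en F m w
  | d+1 => yn F m (w+d) * Yd w d

theorem Xd_zero (w : ℕ) : Xd F m w 0 = en F m w := rfl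
theorem Xd_succ (w d : ℕ) : Xd F m w (d+1) = Xd F m w d * xn F m (w+d) := rfl
theorem Yd_zero (w : ℕ) : Yd F m w 0 = en F m w := rfl
theorem Yd_succ (w d : ℕ) : Yd F m w (d+1) = yn F m (w+d) * Yd F m w d := rfl

noncomputable def P (v w u : ℕ) : Omega F m := Yd F m w (v-w) * Xd F m w (u-w)

theorem P_def (v w u : ℕ) : P F m v w u = Yd F m w (v-w) * Xd F m w (u-w) := rfl

theorem en_Yd {i w d : ℕ} (hi : i ≤ m+2) (h : w + d ≤ m+2) :
    en F m i * Yd F m w d = if i = w + d then Yd F m w d else 0 := by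
  induction d with
  | zero =>
      rw [Yd_zero, hEE F m hi (by omega), Nat.add_zero]
      split_ifs with h1
      · rw [h1]
      · rfl
  | succ d ih =>
      rw [Yd_succ, ← mul_assoc, hEY F m hi (by omega)]
      split_ifs with h1 h2 h2
      · rfl
      · omega
      · omega
      · rw [zero_mul]

theorem Yd_en {i w d : ℕ} (hi : i ≤ m+2) (h : w + d ≤ m+2) :
    Yd F m w d * en F m i = if i = w then Yd F m w d else 0 := by
  induction d with
  | zero =>
      rw [Yd_zero, hEE F m (by omega) hi]
      by_cases h1 : i = w
      · rw [if_pos h1.symm, if_pos h1]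
      · rw [if_neg (fun hh => h1 hh.symm), if_neg h1]
  | succ d ih =>
      rw [Yd_succ, mul_assoc, ih (by omega)]
      split_ifs with h1
      · rfl
      · rw [mul_zero]

theorem en_Xd {i w d : ℕ} (hi : i ≤ m+2) (h : w + d ≤ m+2) :
    en F m i * Xd F m w d = if i = w then Xd F m w d else 0 := by
  induction d with
  | zero =>
      rw [Xd_zero, hEE F m hi (by omega)]
      split_ifs with h1
      · rw [h1]
      · rfl
  | succ d ih =>
      rw [Xd_succ, ← mul_assoc, ih (by omega)]
      split_ifs with h1
      · rfl
      · rw [zero_mul]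

theorem Xd_en {i w d : ℕ} (hi : i ≤ m+2) (h : w + d ≤ m+2) :
    Xd F m w d * en F m i = if i = w + d then Xd F m w d else 0 := by
  induction d with
  | zero =>
      rw [Xd_zero, hEE F m (by omega) hi, Nat.add_zero]
      by_cases h1 : i = w
      · rw [if_pos h1.symm, if_pos h1]
      · rw [if_neg (fun hh => h1 hh.symm), if_neg h1]
  | succ d ih =>
      rw [Xd_succ, mul_assoc, hXE F m hi (by omega)]
      split_ifs with h1 h2 h2
      · rfl
      · omega
      · omega
      · rw [mul_zero]

theorem xn_Yd_eq {w d : ℕ} (h : w + 1 + d ≤ m+2) :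
    xn F m (w+d) * Yd F m (w+1) d = Yd F m w d * xn F m w := by
  induction d with
  | zero =>
      rw [Nat.add_zero, Yd_zero, Yd_zero, hXE F m (by omega) (by omega),
        hEX F m (by omega) (by omega), if_pos rfl, if_pos rfl]
  | succ d ih =>
      rw [Yd_succ, show w + 1 + d = w + d + 1 from by omega, ← mul_assoc,
        show w + (d+1) = w + d + 1 from by omega,
        hCOMM F m (show w + d ≤ m from by omega), mul_assoc,
        ih (by omega), ← mul_assoc, ← Yd_succ]

theorem xn_Yd0 {d : ℕ} (h : d + 1 ≤ m+2) :
    xn F m d * Yd F m 0 (d+1) = 0 := by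
  induction d with
  | zero =>
      rw [Yd_succ, Yd_zero, ← mul_assoc, Nat.add_zero, hXY0, zero_mul]
  | succ d ih =>
      rw [Yd_succ, show (0:ℕ) + (d+1) = d + 1 from by omega, ← mul_assoc,
        hCOMM F m (show d ≤ m from by omega), mul_assoc, ih (by omega), mul_zero]

theorem xn_en (t : ℕ) (ht : t ≤ m+1) : xn F m t * en F m (t+1) = xn F m t := by
  rw [hXE F m (by omega) ht, if_pos rfl]

theorem yn_en (t : ℕ) (ht : t ≤ m+1) : yn F m t * en F m t = yn F m t := by
  rw [hYE F m (by omega) ht, if_pos rfl]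

theorem xn_Yd_ne {t w d : ℕ} (ht : t ≤ m+1) (h : w + d ≤ m+2) (hne : t + 1 ≠ w + d) :
    xn F m t * Yd F m w d = 0 := by
  rw [← xn_en F m t ht, mul_assoc, en_Yd F m (by omega) h, if_neg hne, mul_zero]

theorem yn_Yd {t w d : ℕ} (ht : t ≤ m+1) (h : w + d ≤ m+2) :
    yn F m t * Yd F m w d = if t = w + d then Yd F m w (d+1) else 0 := by
  split_ifs with h1
  · subst h1; rw [Yd_succ]
  · rw [← yn_en F m t ht, mul_assoc, en_Yd F m (by omega) h, if_neg h1, mul_zero]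

theorem xn_Xd {w d : ℕ} (h : w + 1 + d ≤ m+2) :
    xn F m w * Xd F m (w+1) d = Xd F m w (d+1) := by
  induction d with
  | zero =>
      rw [Xd_zero, Xd_succ, Xd_zero, xn_en F m w (by omega), Nat.add_zero,
        hEX F m (by omega) (by omega), if_pos rfl]
  | succ d ih =>
      rw [Xd_succ, ← mul_assoc, ih (by omega),
        show w + 1 + d = w + (d+1) from by omega, ← Xd_succ]

/-! ### Multiplication rules for generators against path elements -/

theorem en_P {i v w u : ℕ} (hi : i ≤ m+2) (hwv : w ≤ v) (hv : v ≤ m+2)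
    (hwu : w ≤ u) (hu : u ≤ m+2) :
    en F m i * P F m v w u = if i = v then P F m v w u else 0 := by
  rw [P_def, ← mul_assoc, en_Yd F m hi (show w + (v-w) ≤ m+2 from by omega),
    show w + (v - w) = v from by omega]
  split_ifs with h1
  · rfl
  · rw [zero_mul]

theorem yn_P {t v w u : ℕ} (ht : t ≤ m+1) (hwv : w ≤ v) (hv : v ≤ m+2)
    (hwu : w ≤ u) (hu : u ≤ m+2) :
    yn F m t * P F m v w u = if t = v then P F m (v+1) w u else 0 := by
  rw [P_def, ← mul_assoc, yn_Yd F m ht (show w + (v-w) ≤ m+2 from by omega),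
    show w + (v - w) = v from by omega]
  split_ifs with h1
  · rw [P_def, show v + 1 - w = (v - w) + 1 from by omega]
  · rw [zero_mul]

theorem xn_P {t v w u : ℕ} (ht : t ≤ m+1) (hwv : w ≤ v) (hv : v ≤ m+2)
    (hwu : w ≤ u) (hu : u ≤ m+2) :
    xn F m t * P F m v w u =
      if t + 1 = v then (if 1 ≤ w then P F m (v-1) (w-1) u else 0) else 0 := by
  rw [P_def, ← mul_assoc]
  by_cases h1 : t + 1 = v
  · rw [if_pos h1]
    by_cases h2 : 1 ≤ w
    · rw [if_pos h2]
      have hA := xn_Yd_eq F m (w := w-1) (d := v-w)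
        (show w - 1 + 1 + (v - w) ≤ m+2 from by omega)
      rw [show w - 1 + (v - w) = t from by omega,
        show w - 1 + 1 = w from by omega] at hA
      rw [hA, mul_assoc]
      have hB := xn_Xd F m (w := w-1) (d := u-w)
        (show w - 1 + 1 + (u - w) ≤ m+2 from by omega)
      rw [show w - 1 + 1 = w from by omega] at hB
      rw [hB, P, show v - 1 - (w - 1) = v - w from by omega,
        show u - (w - 1) = (u - w) + 1 from by omega]
    · rw [if_neg h2]
      have hw0 : w = 0 := by omega
      subst hw0
      rw [show v - 0 = t + 1 from by omega, xn_Yd0 F m (show t + 1 ≤ m+2 from by omega),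
        zero_mul]
  · rw [if_neg h1, xn_Yd_ne F m ht (show w + (v-w) ≤ m+2 from by omega)
      (by omega), zero_mul]


/-! ### Powers of z -/

theorem hz : zΩ F m = ∑ t ∈ Finset.range (m+2), yn F m t * xn F m t := by
  rw [zΩ, ← Fin.sum_univ_eq_sum_range (fun t => yn F m t * xn F m t) (m+2)]
  refine Finset.sum_congr rfl fun t _ => ?_
  rw [yn, xn, Fin.cast_val_eq_self]

theorem z_P {v w u : ℕ} (hwv : w ≤ v) (hv : v ≤ m+2) (hwu : w ≤ u) (hu : u ≤ m+2) :
    zΩ F m * P F m v w u = if 1 ≤ v ∧ 1 ≤ w then P F m v (w-1) u else 0 := by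
  rw [hz, Finset.sum_mul]
  have hterm : ∀ t ∈ Finset.range (m+2), yn F m t * xn F m t * P F m v w u
      = if t = v - 1 then (if 1 ≤ v ∧ 1 ≤ w then P F m v (w-1) u else 0) else 0 := by
    intro t htm
    rw [Finset.mem_range] at htm
    rw [mul_assoc, xn_P F m (by omega) hwv hv hwu hu]
    by_cases h1 : t + 1 = v
    · rw [if_pos h1]
      by_cases h2 : 1 ≤ w
      · rw [if_pos h2, yn_P F m (by omega) (by omega) (by omega) (by omega) hu,
          show v - 1 + 1 = v from by omega]
        by_cases ht' : t = v - 1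
        · rw [if_pos ht', if_pos ht', if_pos (show 1 ≤ v ∧ 1 ≤ w from ⟨by omega, h2⟩)]
        · rw [if_neg ht', if_neg ht']
      · rw [if_neg h2, mul_zero]
        by_cases ht' : t = v - 1
        · rw [if_pos ht', if_neg (fun hc => h2 hc.2)]
        · rw [if_neg ht']
    · rw [if_neg h1, mul_zero]
      by_cases ht' : t = v - 1
      · rw [if_pos ht', if_neg (fun hc => h1 (by omega))]
      · rw [if_neg ht']
  rw [Finset.sum_congr rfl hterm, Finset.sum_ite_eq' (Finset.range (m+2)) (v-1),
    if_pos (Finset.mem_range.mpr (by omega))]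

theorem z_pow (s : ℕ) :
    zΩ F m ^ s = ∑ u ∈ Finset.Icc s (m+2), P F m u (u-s) u := by
  induction s with
  | zero =>
      rw [pow_zero, hone F m,
        show Finset.Icc 0 (m+2) = Finset.range (m+3) from by
          ext a; simp only [Finset.mem_Icc, Finset.mem_range]; omega]
      refine Finset.sum_congr rfl fun u hu => ?_
      rw [Finset.mem_range] at hu
      rw [P_def, Nat.sub_zero, Nat.sub_self, Yd_zero, Xd_zero,
        hEE F m (by omega) (by omega), if_pos rfl]
  | succ s ih =>
      rw [pow_succ', ih, Finset.mul_sum,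
        show Finset.Icc (s+1) (m+2) = (Finset.Icc s (m+2)).filter (fun u => s+1 ≤ u) from by
          ext a; simp only [Finset.mem_Icc, Finset.mem_filter]; omega,
        Finset.sum_filter]
      refine Finset.sum_congr rfl fun u hu => ?_
      rw [Finset.mem_Icc] at hu
      rw [z_P F m (by omega) (by omega) (by omega) (by omega)]
      by_cases h : s + 1 ≤ u
      · rw [if_pos ⟨by omega, by omega⟩, if_pos h,
          show u - s - 1 = u - (s+1) from by omega]
      · rw [if_neg (by omega), if_neg h]

theorem z_pow_top : zΩ F m ^ (m+2) = P F m (m+2) 0 (m+2) := by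
  rw [z_pow, Finset.Icc_self, Finset.sum_singleton, Nat.sub_self]

theorem z_pow_p : zΩ F m ^ (m+3) = 0 := by
  rw [z_pow, Finset.Icc_eq_empty (by omega), Finset.sum_empty]


/-! ### Spanning -/

abbrev Idx (m : ℕ) := Fin (m+3) × Fin (m+3) × Fin (m+3)

def good (b : Idx m) : Prop := (b.2.1 : ℕ) ≤ (b.1 : ℕ) ∧ (b.2.1 : ℕ) ≤ (b.2.2 : ℕ)

instance : DecidablePred (good m) := fun _ => instDecidableAnd

noncomputable def Pb (b : Idx m) : Omega F m :=
  if good m b then P F m b.1 b.2.1 b.2.2 else 0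

theorem Pb_good {b : Idx m} (h : good m b) :
    Pb F m b = P F m (b.1 : ℕ) (b.2.1 : ℕ) (b.2.2 : ℕ) := if_pos h

noncomputable def T : Submodule F (Omega F m) := Submodule.span F (Set.range (Pb F m))

theorem en_Pb_mem (i : Fin (m+3)) (b : Idx m) :
    eΩ F m i * Pb F m b ∈ T F m := by
  by_cases h : good m b
  · rw [Pb_good F m h]
    have : eΩ F m i = en F m (i : ℕ) := by rw [en, Fin.cast_val_eq_self]
    rw [this, en_P F m (by omega) h.1 (by omega) h.2 (by omega)]
    split_ifs
    · rw [← Pb_good F m h]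
      exact Submodule.subset_span ⟨b, rfl⟩
    · exact zero_mem _
  · rw [Pb, if_neg h, mul_zero]; exact zero_mem _

theorem xn_Pb_mem (t : Fin (m+2)) (b : Idx m) :
    xΩ F m t * Pb F m b ∈ T F m := by
  by_cases h : good m b
  · have hwv : (b.2.1 : ℕ) ≤ (b.1 : ℕ) := h.1
    have hwu : (b.2.1 : ℕ) ≤ (b.2.2 : ℕ) := h.2
    rw [Pb_good F m h]
    have : xΩ F m t = xn F m (t : ℕ) := by rw [xn, Fin.cast_val_eq_self]
    rw [this, xn_P F m (by omega) h.1 (by omega) h.2 (by omega)]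
    split_ifs with h1 h2
    · have hb : good m (⟨(b.1 : ℕ) - 1, by omega⟩, ⟨(b.2.1 : ℕ) - 1, by omega⟩, b.2.2) :=
        ⟨show (b.2.1 : ℕ) - 1 ≤ (b.1 : ℕ) - 1 from by omega,
         show (b.2.1 : ℕ) - 1 ≤ (b.2.2 : ℕ) from by omega⟩
      have hP : Pb F m (⟨(b.1 : ℕ) - 1, by omega⟩, ⟨(b.2.1 : ℕ) - 1, by omega⟩, b.2.2)
          = P F m ((b.1 : ℕ) - 1) ((b.2.1 : ℕ) - 1) (b.2.2 : ℕ) := Pb_good F m hb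
      rw [← hP]
      exact Submodule.subset_span ⟨_, rfl⟩
    · exact zero_mem _
    · exact zero_mem _
  · rw [Pb, if_neg h, mul_zero]; exact zero_mem _

theorem yn_Pb_mem (t : Fin (m+2)) (b : Idx m) :
    yΩ F m t * Pb F m b ∈ T F m := by
  by_cases h : good m b
  · have hwv : (b.2.1 : ℕ) ≤ (b.1 : ℕ) := h.1
    have hwu : (b.2.1 : ℕ) ≤ (b.2.2 : ℕ) := h.2
    rw [Pb_good F m h]
    have : yΩ F m t = yn F m (t : ℕ) := by rw [yn, Fin.cast_val_eq_self]
    rw [this, yn_P F m (by omega) h.1 (by omega) h.2 (by omega)]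
    split_ifs with h1
    · have hv1 : (b.1 : ℕ) + 1 ≤ m + 2 := by omega
      have hb : good m (⟨(b.1 : ℕ) + 1, by omega⟩, b.2.1, b.2.2) :=
        ⟨show (b.2.1 : ℕ) ≤ (b.1 : ℕ) + 1 from by omega, h.2⟩
      have hP : Pb F m (⟨(b.1 : ℕ) + 1, by omega⟩, b.2.1, b.2.2)
          = P F m ((b.1 : ℕ) + 1) ((b.2.1 : ℕ)) ((b.2.2 : ℕ)) := Pb_good F m hb
      rw [← hP]
      exact Submodule.subset_span ⟨_, rfl⟩
    · exact zero_mem _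
  · rw [Pb, if_neg h, mul_zero]; exact zero_mem _

theorem one_mem_T : (1 : Omega F m) ∈ T F m := by
  rw [hone F m]
  refine Submodule.sum_mem _ fun i hi => ?_
  rw [Finset.mem_range] at hi
  have hb : good m ((i : Fin (m+3)), (i : Fin (m+3)), (i : Fin (m+3))) := ⟨le_rfl, le_rfl⟩
  have hP := Pb_good F m hb
  have : en F m i = P F m ((i : Fin (m+3)) : ℕ) ((i : Fin (m+3)) : ℕ) ((i : Fin (m+3)) : ℕ) := by
    rw [P_def, Nat.sub_self, Yd_zero, Xd_zero, hEE F m (by omega) (by omega), if_pos rfl,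
      en, en, fv3 m i (by omega)]
  rw [this, ← hP]
  exact Submodule.subset_span ⟨_, rfl⟩

theorem mul_mem_T (x : FreeAlgebra F (OGen m)) :
    ∀ ω ∈ T F m, mkO F m x * ω ∈ T F m := by
  induction x using FreeAlgebra.induction with
  | grade0 r =>
      intro ω hω
      rw [(mkO F m).commutes r, ← Algebra.smul_def]
      exact Submodule.smul_mem _ _ hω
  | grade1 g =>
      intro ω hω
      refine Submodule.span_induction ?_ ?_ ?_ ?_ hω
      · rintro _ ⟨b, rfl⟩
        cases g with
        | e i => exact en_Pb_mem F m i b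
        | x t => exact xn_Pb_mem F m t b
        | y t => exact yn_Pb_mem F m t b
      · rw [mul_zero]; exact zero_mem _
      · intro a b _ _ ha hb
        rw [mul_add]; exact add_mem ha hb
      · intro r a _ ha
        rw [mul_smul_comm]; exact Submodule.smul_mem _ _ ha
  | mul a b iha ihb =>
      intro ω hω
      rw [map_mul, mul_assoc]
      exact iha _ (ihb _ hω)
  | add a b iha ihb =>
      intro ω hω
      rw [map_add, add_mul]
      exact add_mem (iha _ hω) (ihb _ hω)

theorem mem_T (ω : Omega F m) : ω ∈ T F m := by
  obtain ⟨x, rfl⟩ := RingQuot.mkAlgHom_surjective F (OmegaRel F m) ω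
  have : RingQuot.mkAlgHom F (OmegaRel F m) x = mkO F m x * 1 := by rw [mul_one]; rfl
  rw [this]
  exact mul_mem_T F m x 1 (one_mem_T F m)


/-! ### The representation on path elements -/

theorem Wcongr (f : W F m) {a b : Fin (m+3)} {k l : ℕ} (h1 : (a : ℕ) = (b : ℕ)) (h2 : k = l) :
    f (a, k) = f (b, l) := by
  have h3 : ((a, k) : V m) = (b, l) := by rw [Prod.mk.injEq]; exact ⟨Fin.ext h1, h2⟩
  rw [h3]

theorem rho_en {i : ℕ} (h : i ≤ m+2) (f : W F m) (q : V m) :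
    rho F m (en F m i) f q = if (q.1 : ℕ) = i then f q else 0 := by
  rw [en, eΩ, rho_mk, rFree_e, Ee_apply,
    if_congr (by rw [Fin.ext_iff, fv3 m i h]) rfl rfl]

theorem rho_xn {t : ℕ} (h : t ≤ m+1) (f : W F m) (q : V m) :
    rho F m (xn F m t) f q =
      if (q.1 : ℕ) = t ∧ q.2 ≤ t then f (⟨t+1, by omega⟩, q.2) else 0 := by
  rw [xn, xΩ, rho_mk, rFree_x, Xx_apply]
  have hc : (q.1 = (t : Fin (m+2)).castSucc ∧ q.2 ≤ ((t : Fin (m+2)) : ℕ))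
      ↔ ((q.1 : ℕ) = t ∧ q.2 ≤ t) := by
    rw [Fin.ext_iff, fcs m t h, fv3 m t (by omega), fv2 m t h]
  have hval : (((t : Fin (m+2)).succ, q.2) : V m) = ((⟨t+1, by omega⟩ : Fin (m+3)), q.2) := by
    rw [Prod.mk.injEq]
    exact ⟨by rw [fss m t h]; exact Fin.ext (by rw [fv3 m (t+1) (by omega), Fin.val_mk]), rfl⟩
  rw [if_congr hc rfl rfl, hval]

theorem rho_yn {t : ℕ} (h : t ≤ m+1) (f : W F m) (q : V m) :
    rho F m (yn F m t) f q =
      if (q.1 : ℕ) = t+1 ∧ 1 ≤ q.2 then f (⟨t, by omega⟩, q.2 - 1) else 0 := by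
  rw [yn, yΩ, rho_mk, rFree_y, Yy_apply]
  have hc : (q.1 = (t : Fin (m+2)).succ ∧ 1 ≤ q.2) ↔ ((q.1 : ℕ) = t+1 ∧ 1 ≤ q.2) := by
    rw [Fin.ext_iff, fss m t h, fv3 m (t+1) (by omega)]
  have hval : (((t : Fin (m+2)).castSucc, q.2 - 1) : V m)
      = ((⟨t, by omega⟩ : Fin (m+3)), q.2 - 1) := by
    rw [Prod.mk.injEq]
    exact ⟨by rw [fcs m t h]; exact Fin.ext (by rw [fv3 m t (by omega), Fin.val_mk]), rfl⟩
  rw [if_congr hc rfl rfl, hval]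

theorem rho_Xd {w d : ℕ} (h : w + d ≤ m+2) (f : W F m) (q : V m) :
    rho F m (Xd F m w d) f q =
      if (q.1 : ℕ) = w ∧ (d = 0 ∨ q.2 ≤ w) then f (⟨w+d, by omega⟩, q.2) else 0 := by
  revert h f q
  induction d with
  | zero =>
      intro h f q
      rw [Xd_zero, rho_en F m (by omega)]
      by_cases hq : (q.1 : ℕ) = w
      · rw [if_pos hq, if_pos ⟨hq, Or.inl rfl⟩]
        apply congrArg
        rw [Prod.ext_iff]
        exact ⟨Fin.ext (show (q.1 : ℕ) = w + 0 from by omega), rfl⟩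
      · rw [if_neg hq, if_neg (fun hc => hq hc.1)]
  | succ d ih =>
      intro h f q
      rw [Xd_succ, map_mul, Module.End.mul_apply, ih (by omega)]
      by_cases h1 : (q.1 : ℕ) = w ∧ (d = 0 ∨ q.2 ≤ w)
      · rw [if_pos h1, rho_xn F m (show w + d ≤ m+1 from by omega)]
        simp only [Fin.val_mk, eq_self_iff_true, true_and]
        by_cases h2 : q.2 ≤ w + d
        · rw [if_pos h2,
            if_pos ⟨h1.1, Or.inr (by rcases h1.2 with h0|h0 <;> omega)⟩]
          apply congrArg
          rw [Prod.ext_iff]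
          exact ⟨Fin.ext (show w+d+1 = w+(d+1) from by omega), rfl⟩
        · have hA : ¬ ((q.1 : ℕ) = w ∧ (d + 1 = 0 ∨ q.2 ≤ w)) := by
            rintro ⟨-, h0|h0⟩
            · omega
            · exact h2 (by omega)
          rw [if_neg h2, if_neg hA]
      · have hA : ¬ ((q.1 : ℕ) = w ∧ (d + 1 = 0 ∨ q.2 ≤ w)) := by
          rintro ⟨hq, h0|h0⟩
          · omega
          · exact h1 ⟨hq, Or.inr h0⟩
        rw [if_neg h1, if_neg hA]

theorem rho_Yd {w d : ℕ} (h : w + d ≤ m+2) (f : W F m) (q : V m) :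
    rho F m (Yd F m w d) f q =
      if (q.1 : ℕ) = w + d ∧ d ≤ q.2 then f (⟨w, by omega⟩, q.2 - d) else 0 := by
  revert h f q
  induction d with
  | zero =>
      intro h f q
      rw [Yd_zero, rho_en F m (by omega)]
      by_cases hq : (q.1 : ℕ) = w
      · rw [if_pos hq, if_pos ⟨by omega, by omega⟩]
        apply congrArg
        rw [Prod.ext_iff]
        exact ⟨Fin.ext (show (q.1 : ℕ) = w from hq), show q.2 = q.2 - 0 from by omega⟩
      · rw [if_neg hq, if_neg (fun hc => hq (by omega))]
  | succ d ih =>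
      intro h f q
      rw [Yd_succ, map_mul, Module.End.mul_apply, rho_yn F m (show w + d ≤ m+1 from by omega)]
      by_cases h1 : (q.1 : ℕ) = w + d + 1 ∧ 1 ≤ q.2
      · rw [if_pos h1, ih (by omega)]
        simp only [Fin.val_mk, eq_self_iff_true, true_and]
        by_cases h2 : d ≤ q.2 - 1
        · rw [if_pos h2, if_pos ⟨by omega, by omega⟩]
          apply congrArg
          rw [Prod.ext_iff]
          exact ⟨Fin.ext (show (w : ℕ) = w from rfl), show q.2 - 1 - d = q.2 - (d+1) from by omega⟩
        · rw [if_neg h2, if_neg (fun hc => h2 (by omega))]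
      · rw [if_neg h1, if_neg (fun hc => h1 ⟨by omega, by omega⟩)]

theorem rho_P {v w u : ℕ} (hwv : w ≤ v) (hv : v ≤ m+2) (hwu : w ≤ u) (hu : u ≤ m+2)
    (f : W F m) (q : V m) :
    rho F m (P F m v w u) f q =
      if (q.1 : ℕ) = v ∧ v - w ≤ q.2 ∧ (u = w ∨ q.2 - (v-w) ≤ w)
      then f (⟨u, by omega⟩, q.2 - (v-w)) else 0 := by
  rw [P_def, map_mul, Module.End.mul_apply,
    rho_Yd F m (show w + (v-w) ≤ m+2 from by omega)]
  have hcs : ((q.1 : ℕ) = w + (v-w) ∧ v - w ≤ q.2) ↔ ((q.1 : ℕ) = v ∧ v - w ≤ q.2) := by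
    constructor <;> (rintro ⟨ha, hb2⟩; exact ⟨by omega, hb2⟩)
  rw [if_congr hcs rfl rfl]
  by_cases h1 : (q.1 : ℕ) = v ∧ v - w ≤ q.2
  · rw [if_pos h1, rho_Xd F m (show w + (u-w) ≤ m+2 from by omega)]
    simp only [Fin.val_mk, eq_self_iff_true, true_and]
    by_cases h2 : u = w ∨ q.2 - (v-w) ≤ w
    · have hor : u - w = 0 ∨ q.2 - (v-w) ≤ w := by
        rcases h2 with h0|h0
        · exact Or.inl (by omega)
        · exact Or.inr h0
      rw [if_pos hor, if_pos ⟨h1.1, h1.2, h2⟩]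
      apply congrArg
      rw [Prod.ext_iff]
      exact ⟨Fin.ext (show w + (u-w) = u from by omega), rfl⟩
    · have hA : ¬ (u - w = 0 ∨ q.2 - (v - w) ≤ w) := by
        rintro (h0|h0)
        · exact h2 (Or.inl (by omega))
        · exact h2 (Or.inr h0)
      rw [if_neg hA, if_neg (fun hc => h2 hc.2.2)]
  · rw [if_neg h1, if_neg (fun hc => h1 ⟨hc.1, hc.2.1⟩)]

/-! ### Coefficient extraction -/

noncomputable def dv (u : Fin (m+3)) (κ : ℕ) : W F m := fun q => if q = (u, κ) then 1 else 0

noncomputable def Phi (b : Idx m) (A : Module.End F (W F m)) : F :=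
  A (dv F m b.2.2 0) (b.1, (b.1 : ℕ) - (b.2.1 : ℕ))

theorem Phi_Pb {b b' : Idx m} (hb : good m b) (hb' : good m b') :
    Phi F m b (rho F m (Pb F m b')) = if b' = b then 1 else 0 := by
  rw [Pb_good F m hb', Phi,
    rho_P F m hb'.1 (by omega) hb'.2 (by omega)]
  by_cases hcond : ((b.1 : Fin (m+3)) : ℕ) = (b'.1 : ℕ)
      ∧ (b'.1 : ℕ) - (b'.2.1 : ℕ) ≤ (b.1 : ℕ) - (b.2.1 : ℕ)
      ∧ ((b'.2.2 : ℕ) = (b'.2.1 : ℕ) ∨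
          ((b.1 : ℕ) - (b.2.1 : ℕ)) - ((b'.1 : ℕ) - (b'.2.1 : ℕ)) ≤ (b'.2.1 : ℕ))
  · rw [if_pos hcond, dv]
    by_cases hpt : (((⟨(b'.2.2 : ℕ), by omega⟩ : Fin (m+3)),
        ((b.1 : ℕ) - (b.2.1 : ℕ)) - ((b'.1 : ℕ) - (b'.2.1 : ℕ))) : V m) = (b.2.2, 0)
    · rw [if_pos hpt]
      have hp := Prod.mk.injEq .. ▸ hpt
      have hu : (b'.2.2 : ℕ) = (b.2.2 : ℕ) := by
        have := congrArg Fin.val hp.1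
        rwa [Fin.val_mk] at this
      have hk : ((b.1 : ℕ) - (b.2.1 : ℕ)) - ((b'.1 : ℕ) - (b'.2.1 : ℕ)) = 0 := hp.2
      have hbb : b' = b := by
        have hv1 : (b'.1 : ℕ) = (b.1 : ℕ) := hcond.1.symm
        have hw1 : (b'.2.1 : ℕ) = (b.2.1 : ℕ) := by
          have hbwv : (b.2.1 : ℕ) ≤ (b.1 : ℕ) := hb.1
          have hbwv' : (b'.2.1 : ℕ) ≤ (b'.1 : ℕ) := hb'.1
          omega
        rw [Prod.ext_iff, Prod.ext_iff]
        exact ⟨Fin.ext hv1, Fin.ext hw1, Fin.ext hu⟩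
      rw [if_pos hbb]
    · rw [if_neg hpt]
      rcases eq_or_ne b' b with rfl | hne
      · exfalso
        apply hpt
        rw [Prod.mk.injEq]
        refine ⟨Fin.ext (by rw [Fin.val_mk]), by omega⟩
      · rw [if_neg hne]
  · rw [if_neg hcond]
    rcases eq_or_ne b' b with rfl | hne
    · exfalso
      apply hcond
      refine ⟨rfl, le_rfl, Or.inr (by omega)⟩
    · rw [if_neg hne]


/-! ### z is central -/

theorem z_en {i : ℕ} (hi : i ≤ m+2) : zΩ F m * en F m i = en F m i * zΩ F m := by
  rw [hz, Finset.sum_mul, Finset.mul_sum]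
  refine Finset.sum_congr rfl fun t ht => ?_
  rw [Finset.mem_range] at ht
  rw [mul_assoc, hXE F m hi (by omega), ← mul_assoc, hEY F m hi (by omega)]
  split_ifs with h1
  · rfl
  · rw [mul_zero, zero_mul]

theorem xx_split {s t : ℕ} (hs : s ≤ m+1) (ht : t ≤ m+1) :
    xn F m s * xn F m t = if s + 1 = t then xn F m s * xn F m t else 0 := by
  conv_lhs => rw [← xn_en F m s hs, mul_assoc, hEX F m (by omega) ht]
  split_ifs with h1
  · rfl
  · rw [mul_zero]

theorem xy_split {s t : ℕ} (hs : s ≤ m+1) (ht : t ≤ m+1) :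
    xn F m s * yn F m t = if s = t then xn F m s * yn F m t else 0 := by
  conv_lhs => rw [← xn_en F m s hs, mul_assoc, hEY F m (by omega) ht]
  by_cases h1 : s = t
  · rw [if_pos (show s + 1 = t + 1 from by omega), if_pos h1]
  · rw [if_neg (show ¬ (s + 1 = t + 1) from by omega), mul_zero, if_neg h1]

theorem yy_split {s t : ℕ} (hs : s ≤ m+1) (ht : t ≤ m+1) :
    yn F m s * yn F m t = if t + 1 = s then yn F m s * yn F m t else 0 := by
  conv_lhs => rw [← yn_en F m s hs, mul_assoc, hEY F m (by omega) ht]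
  by_cases h1 : t + 1 = s
  · rw [if_pos (show s = t + 1 from by omega), if_pos h1]
  · rw [if_neg (show ¬ (s = t + 1) from by omega), mul_zero, if_neg h1]

theorem yx_split {s t : ℕ} (hs : s ≤ m+1) (ht : t ≤ m+1) :
    yn F m s * xn F m t = if s = t then yn F m s * xn F m t else 0 := by
  conv_lhs => rw [← yn_en F m s hs, mul_assoc, hEX F m (by omega) ht]
  split_ifs with h1
  · rfl
  · rw [mul_zero]

theorem z_xn {t : ℕ} (ht : t ≤ m+1) : zΩ F m * xn F m t = xn F m t * zΩ F m := by
  rw [hz, Finset.sum_mul, Finset.mul_sum]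
  have hL : ∀ s ∈ Finset.range (m+2), yn F m s * xn F m s * xn F m t
      = if s = t - 1 then (if 1 ≤ t then yn F m (t-1) * xn F m (t-1) * xn F m t else 0) else 0 := by
    intro s hsm
    rw [Finset.mem_range] at hsm
    rw [mul_assoc, xx_split F m (by omega) ht]
    by_cases h1 : s + 1 = t
    · rw [if_pos h1, if_pos (by omega), if_pos (by omega), show t - 1 = s from by omega,
        mul_assoc]
    · rw [if_neg h1, mul_zero]
      by_cases h2 : s = t - 1
      · rw [if_pos h2, if_neg (by omega)]
      · rw [if_neg h2]
  have hR : ∀ s ∈ Finset.range (m+2), xn F m t * (yn F m s * xn F m s)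
      = if s = t then xn F m t * yn F m t * xn F m t else 0 := by
    intro s hsm
    rw [Finset.mem_range] at hsm
    rw [← mul_assoc, xy_split F m ht (by omega)]
    by_cases h1 : s = t
    · rw [if_pos (by omega), if_pos h1, h1]
    · rw [if_neg (by omega), zero_mul, if_neg h1]
  rw [Finset.sum_congr rfl hL, Finset.sum_congr rfl hR,
    Finset.sum_ite_eq' (Finset.range (m+2)) (t-1), Finset.sum_ite_eq' (Finset.range (m+2)) t,
    if_pos (Finset.mem_range.mpr (by omega)), if_pos (Finset.mem_range.mpr (by omega))]
  by_cases h1 : 1 ≤ t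
  · rw [if_pos h1, show t = (t-1) + 1 from by omega, hCOMM F m (show t-1 ≤ m from by omega),
      show t - 1 + 1 - 1 = t - 1 from by omega]
  · rw [if_neg h1, show t = 0 from by omega, hXY0, zero_mul]

theorem z_yn {t : ℕ} (ht : t ≤ m+1) : zΩ F m * yn F m t = yn F m t * zΩ F m := by
  rw [hz, Finset.sum_mul, Finset.mul_sum]
  have hL : ∀ s ∈ Finset.range (m+2), yn F m s * xn F m s * yn F m t
      = if s = t then yn F m t * (xn F m t * yn F m t) else 0 := by
    intro s hsm
    rw [Finset.mem_range] at hsm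
    rw [mul_assoc, xy_split F m (by omega) ht]
    by_cases h1 : s = t
    · rw [if_pos h1, if_pos h1, h1]
    · rw [if_neg h1, mul_zero, if_neg h1]
  have hR : ∀ s ∈ Finset.range (m+2), yn F m t * (yn F m s * xn F m s)
      = if s = t - 1 then (if 1 ≤ t then yn F m t * (yn F m (t-1) * xn F m (t-1)) else 0) else 0 := by
    intro s hsm
    rw [Finset.mem_range] at hsm
    rw [← mul_assoc, yy_split F m ht (by omega)]
    by_cases h1 : s + 1 = t
    · rw [if_pos (by omega), if_pos (by omega), if_pos (by omega), mul_assoc,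
        show t - 1 = s from by omega]
    · rw [if_neg (by omega), zero_mul]
      by_cases h2 : s = t - 1
      · rw [if_pos h2, if_neg (by omega)]
      · rw [if_neg h2]
  rw [Finset.sum_congr rfl hL, Finset.sum_congr rfl hR,
    Finset.sum_ite_eq' (Finset.range (m+2)) t, Finset.sum_ite_eq' (Finset.range (m+2)) (t-1),
    if_pos (Finset.mem_range.mpr (by omega)), if_pos (Finset.mem_range.mpr (by omega))]
  by_cases h1 : 1 ≤ t
  · rw [if_pos h1, show t = (t-1) + 1 from by omega, hCOMM F m (show t-1 ≤ m from by omega),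
      show t - 1 + 1 - 1 = t - 1 from by omega]
  · rw [if_neg h1, show t = 0 from by omega, hXY0, mul_zero]

theorem mk_z_comm (x : FreeAlgebra F (OGen m)) :
    mkO F m x * zΩ F m = zΩ F m * mkO F m x := by
  induction x using FreeAlgebra.induction with
  | grade0 r =>
      rw [(mkO F m).commutes r]
      exact Algebra.commutes r (zΩ F m)
  | grade1 g =>
      cases g with
      | e i =>
          have he : mkO F m (FreeAlgebra.ι F (OGen.e i)) = en F m (i : ℕ) := by
            rw [en, Fin.cast_val_eq_self]; rfl
          rw [he]
          exact (z_en F m (by omega)).symm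
      | x t =>
          have hx : mkO F m (FreeAlgebra.ι F (OGen.x t)) = xn F m (t : ℕ) := by
            rw [xn, Fin.cast_val_eq_self]; rfl
          rw [hx]
          exact (z_xn F m (by omega)).symm
      | y t =>
          have hy : mkO F m (FreeAlgebra.ι F (OGen.y t)) = yn F m (t : ℕ) := by
            rw [yn, Fin.cast_val_eq_self]; rfl
          rw [hy]
          exact (z_yn F m (by omega)).symm
  | mul a b iha ihb =>
      rw [map_mul, mul_assoc, ihb, ← mul_assoc, iha, mul_assoc]
  | add a b iha ihb =>
      rw [map_add, add_mul, mul_add, iha, ihb]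

theorem z_central : zΩ F m ∈ Subalgebra.center F (Omega F m) := by
  rw [Subalgebra.mem_center_iff]
  intro a
  obtain ⟨x, rfl⟩ := RingQuot.mkAlgHom_surjective F (OmegaRel F m) a
  exact mk_z_comm F m x

/-! ### Phi is linear -/

theorem dv_apply (u : Fin (m+3)) (κ : ℕ) (q : V m) :
    dv F m u κ q = if q = (u, κ) then 1 else 0 := rfl

theorem Phi_zero (b : Idx m) : Phi F m b (0 : Module.End F (W F m)) = 0 := rfl

theorem Phi_smul (b : Idx m) (c : F) (A : Module.End F (W F m)) :
    Phi F m b (c • A) = c * Phi F m b A := by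
  rw [Phi, Phi, LinearMap.smul_apply, Pi.smul_apply, smul_eq_mul]

theorem Phi_sum {α : Type*} (s : Finset α) (A : α → Module.End F (W F m)) (b : Idx m) :
    Phi F m b (∑ i ∈ s, A i) = ∑ i ∈ s, Phi F m b (A i) := by
  rw [Phi, LinearMap.sum_apply, Finset.sum_apply]
  rfl

/-! ### Coefficients are determined -/

theorem coeff_eq {ω : Omega F m} {c : Idx m → F} (hc : ∑ b, c b • Pb F m b = ω)
    {b' : Idx m} (hb' : good m b') : Phi F m b' (rho F m ω) = c b' := by
  rw [← hc, map_sum]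
  have hterm : ∀ b ∈ (Finset.univ : Finset (Idx m)),
      Phi F m b' (rho F m (c b • Pb F m b)) = if b = b' then c b else 0 := by
    intro b _
    rw [map_smul, Phi_smul]
    by_cases hb : good m b
    · rw [Phi_Pb F m hb' hb]
      split_ifs with h1
      · rw [mul_one]
      · rw [mul_zero]
    · rw [Pb, if_neg hb, map_zero, Phi_zero, mul_zero]
      rw [if_neg (fun h1 => hb (by rw [h1]; exact hb'))]
  rw [Phi_sum, Finset.sum_congr rfl hterm, Finset.sum_ite_eq' Finset.univ b' c,
    if_pos (Finset.mem_univ b')]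

theorem span_ext {α β : Omega F m}
    (h : ∀ b : Idx m, good m b → Phi F m b (rho F m α) = Phi F m b (rho F m β)) : α = β := by
  obtain ⟨c, hc⟩ := (Submodule.mem_span_range_iff_exists_fun F).mp (mem_T F m α)
  obtain ⟨c', hc'⟩ := (Submodule.mem_span_range_iff_exists_fun F).mp (mem_T F m β)
  rw [← hc, ← hc']
  refine Finset.sum_congr rfl fun b _ => ?_
  by_cases hb : good m b
  · rw [show c b = c' b from by
      rw [← coeff_eq F m hc hb, ← coeff_eq F m hc' hb, h b hb]]
  · rw [Pb, if_neg hb, smul_zero, smul_zero]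


/-! ### Diagonal coefficients -/

def diagb (u s : ℕ) : Idx m :=
  ((u : Fin (m+3)), ((u - s : ℕ) : Fin (m+3)), (u : Fin (m+3)))

theorem diagb_good {u s : ℕ} (hu : u ≤ m+2) : good m (diagb m u s) :=
  ⟨show (((u - s : ℕ) : Fin (m+3)) : ℕ) ≤ (((u : ℕ) : Fin (m+3)) : ℕ) from by
      rw [fv3 m _ (by omega), fv3 m _ (by omega)]; omega,
   show (((u - s : ℕ) : Fin (m+3)) : ℕ) ≤ (((u : ℕ) : Fin (m+3)) : ℕ) from by
      rw [fv3 m _ (by omega), fv3 m _ (by omega)]; omega⟩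

theorem Pb_diagb {u s : ℕ} (hu : u ≤ m+2) :
    Pb F m (diagb m u s) = P F m u (u - s) u := by
  rw [Pb_good F m (diagb_good m hu)]
  show P F m (((u : ℕ) : Fin (m+3)) : ℕ) (((u - s : ℕ) : Fin (m+3)) : ℕ)
      (((u : ℕ) : Fin (m+3)) : ℕ) = _
  rw [fv3 m u hu, fv3 m (u-s) (by omega)]

theorem diagb_eq_iff {u' s : ℕ} (hu' : u' ≤ m+2) (b : Idx m) :
    diagb m u' s = b ↔
      (u' = (b.1 : ℕ) ∧ u' - s = (b.2.1 : ℕ) ∧ u' = (b.2.2 : ℕ)) := by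
  constructor
  · rintro rfl
    exact ⟨(fv3 m u' hu').symm, (fv3 m (u'-s) (by omega)).symm, (fv3 m u' hu').symm⟩
  · rintro ⟨h1, h2, h3⟩
    have e1 : ((u' : ℕ) : Fin (m+3)) = b.1 := Fin.ext (by rw [fv3 m u' hu']; exact h1)
    have e2 : ((u' - s : ℕ) : Fin (m+3)) = b.2.1 :=
      Fin.ext (by rw [fv3 m _ (by omega)]; exact h2)
    have e3 : ((u' : ℕ) : Fin (m+3)) = b.2.2 := Fin.ext (by rw [fv3 m u' hu']; exact h3)
    rw [Prod.ext_iff, Prod.ext_iff]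
    exact ⟨e1, e2, e3⟩

theorem Phi_z_pow {b : Idx m} (hb : good m b) {s : ℕ} (hs : s ≤ m+2) :
    Phi F m b (rho F m (zΩ F m ^ s)) =
      if b.2.2 = b.1 ∧ (b.1 : ℕ) - (b.2.1 : ℕ) = s ∧ s ≤ (b.1 : ℕ) then 1 else 0 := by
  rw [z_pow, map_sum, Phi_sum]
  have hterm : ∀ u ∈ Finset.Icc s (m+2), Phi F m b (rho F m (P F m u (u-s) u))
      = if u = (b.1 : ℕ) then
          (if b.2.2 = b.1 ∧ (b.1 : ℕ) - (b.2.1 : ℕ) = s ∧ s ≤ (b.1 : ℕ) then 1 else 0)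
        else 0 := by
    intro u hu
    rw [Finset.mem_Icc] at hu
    rw [← Pb_diagb F m hu.2, Phi_Pb F m hb (diagb_good m hu.2)]
    by_cases h1 : diagb m u s = b
    · rw [if_pos h1]
      rw [diagb_eq_iff m hu.2] at h1
      rw [if_pos h1.1, if_pos ⟨Fin.ext (by omega), by omega, by omega⟩]
    · rw [if_neg h1]
      by_cases h2 : u = (b.1 : ℕ)
      · rw [if_pos h2, if_neg ?_]
        intro hC
        apply h1
        rw [diagb_eq_iff m hu.2]
        have hv := congrArg Fin.val hC.1
        have hg := hb.1
        exact ⟨h2, by omega, by omega⟩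
      · rw [if_neg h2]
  rw [Finset.sum_congr rfl hterm, Finset.sum_ite_eq' (Finset.Icc s (m+2)) ((b.1 : ℕ))]
  by_cases hmem : (b.1 : ℕ) ∈ Finset.Icc s (m+2)
  · rw [if_pos hmem]
  · rw [if_neg hmem,
      if_neg (fun hC => hmem (Finset.mem_Icc.mpr ⟨by omega, by omega⟩))]

theorem offdiag_zero {ω : Omega F m} (hcen : ∀ a, a * ω = ω * a) {b : Idx m}
    (hne : b.1 ≠ b.2.2) : Phi F m b (rho F m ω) = 0 := by
  have h1 : eΩ F m b.1 * ω * eΩ F m b.2.2 = 0 := by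
    rw [hcen (eΩ F m b.1), mul_assoc, heF F m b.1 b.2.2, if_neg hne, mul_zero]
  have h2 : Phi F m b (rho F m (eΩ F m b.1 * ω * eΩ F m b.2.2)) = Phi F m b (rho F m ω) := by
    rw [map_mul, map_mul, Phi, Phi, Module.End.mul_apply, Module.End.mul_apply]
    have he2 : eΩ F m b.2.2 = en F m ((b.2.2 : ℕ)) := by rw [en, Fin.cast_val_eq_self]
    have ha : rho F m (eΩ F m b.2.2) (dv F m b.2.2 0) = dv F m b.2.2 0 := by
      funext q
      rw [he2, rho_en F m (by omega)]
      by_cases hq1 : (q.1 : ℕ) = (b.2.2 : ℕ)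
      · rw [if_pos hq1]
      · rw [if_neg hq1, dv_apply, if_neg (fun hq => hq1 (by rw [hq]))]
    rw [ha]
    have he1 : eΩ F m b.1 = en F m ((b.1 : ℕ)) := by rw [en, Fin.cast_val_eq_self]
    rw [he1, rho_en F m (by omega), if_pos rfl]
  rw [← h2, h1, map_zero, Phi_zero]

theorem diag_eq {ω : Omega F m} (hcen : ∀ a, a * ω = ω * a) {u s : ℕ} (hs : s ≤ u)
    (hu : u ≤ m+1) :
    Phi F m (diagb m (u+1) s) (rho F m ω) = Phi F m (diagb m u s) (rho F m ω) := by
  have h1 : rho F m (ω * xn F m u) = rho F m (xn F m u * ω) := by rw [hcen (xn F m u)]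
  rw [map_mul, map_mul] at h1
  have h3 : rho F m (xn F m u) (dv F m (((u+1 : ℕ)) : Fin (m+3)) 0)
      = dv F m ((u : ℕ) : Fin (m+3)) 0 := by
    funext q
    rw [rho_xn F m (by omega), dv_apply]
    by_cases hq : (q.1 : ℕ) = u ∧ q.2 ≤ u
    · rw [if_pos hq, dv_apply]
      by_cases hz : q.2 = 0
      · rw [if_pos (show ((⟨u+1, by omega⟩ : Fin (m+3)), q.2)
            = (((u+1 : ℕ) : Fin (m+3)), 0) from by
              rw [Prod.mk.injEq]
              exact ⟨Fin.ext (by rw [Fin.val_mk, fv3 m _ (by omega)]), hz⟩),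
          if_pos (show q = (((u : ℕ) : Fin (m+3)), 0) from by
              rw [Prod.ext_iff]
              exact ⟨Fin.ext (by rw [fv3 m u (by omega)]; exact hq.1), hz⟩)]
      · rw [if_neg (fun h => hz (by
              have := congrArg Prod.snd h
              simpa using this)),
          if_neg (fun h => hz (by
              have := congrArg Prod.snd h
              simpa using this))]
    · rw [if_neg hq, dv_apply, if_neg ?_]
      intro hq2
      apply hq
      rw [Prod.ext_iff] at hq2
      refine ⟨by rw [hq2.1]; exact fv3 m u (by omega), by rw [hq2.2]; omega⟩
  have h2 := congrArg (fun A : Module.End F (W F m) =>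
      A (dv F m (((u+1 : ℕ)) : Fin (m+3)) 0) ((((u : ℕ)) : Fin (m+3)), s)) h1
  simp only [Module.End.mul_apply] at h2
  rw [h3] at h2
  rw [rho_xn F m (by omega)] at h2
  rw [if_pos (show (((((u : ℕ)) : Fin (m+3)), s).1 : ℕ) = u ∧ s ≤ u from
      ⟨fv3 m u (by omega), hs⟩)] at h2
  have hL : Phi F m (diagb m u s) (rho F m ω)
      = rho F m ω (dv F m ((u : ℕ) : Fin (m+3)) 0) (((u : ℕ) : Fin (m+3)), s) := by
    rw [Phi]
    have hpt : (((diagb m u s).1 : Fin (m+3)),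
        ((diagb m u s).1 : ℕ) - ((diagb m u s).2.1 : ℕ)) = (((u : ℕ) : Fin (m+3)), s) := by
      rw [Prod.mk.injEq]
      refine ⟨rfl, ?_⟩
      have e1 : ((diagb m u s).1 : ℕ) = u := fv3 m u (by omega)
      have e2 : ((diagb m u s).2.1 : ℕ) = u - s := fv3 m (u-s) (by omega)
      rw [e1, e2]
      omega
    rw [hpt]
    rfl
  have hR : Phi F m (diagb m (u+1) s) (rho F m ω)
      = rho F m ω (dv F m ((u+1 : ℕ) : Fin (m+3)) 0) ((⟨u+1, by omega⟩ : Fin (m+3)), s) := by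
    rw [Phi]
    have hpt : (((diagb m (u+1) s).1 : Fin (m+3)),
        ((diagb m (u+1) s).1 : ℕ) - ((diagb m (u+1) s).2.1 : ℕ))
        = ((⟨u+1, by omega⟩ : Fin (m+3)), s) := by
      rw [Prod.mk.injEq]
      have e1 : ((diagb m (u+1) s).1 : ℕ) = u+1 := fv3 m (u+1) (by omega)
      have e2 : ((diagb m (u+1) s).2.1 : ℕ) = u+1 - s := fv3 m (u+1-s) (by omega)
      refine ⟨Fin.ext (by rw [e1, Fin.val_mk]), ?_⟩
      rw [e1, e2]
      omega
    rw [hpt]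
    rfl
  rw [hL, hR, h2]

theorem diag_chain {ω : Omega F m} (hcen : ∀ a, a * ω = ω * a) :
    ∀ (d u s : ℕ), s ≤ u → u + d ≤ m+2 →
      Phi F m (diagb m (u+d) s) (rho F m ω) = Phi F m (diagb m u s) (rho F m ω) := by
  intro d
  induction d with
  | zero => intro u s _ _; rw [Nat.add_zero]
  | succ d ih =>
      intro u s hs hum
      rw [show u + (d+1) = (u+d) + 1 from by omega,
        diag_eq F m hcen (show s ≤ u + d from by omega) (by omega)]
      exact ih u s hs (by omega)

theorem center_rep {ω : Omega F m} (hcen : ∀ a, a * ω = ω * a) :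
    ω = ∑ s ∈ Finset.range (m+3),
      Phi F m (diagb m (m+2) s) (rho F m ω) • zΩ F m ^ s := by
  apply span_ext
  intro b hb
  rw [map_sum, Phi_sum]
  by_cases hdiag : b.2.2 = b.1
  · have hwv : (b.2.1 : ℕ) ≤ (b.1 : ℕ) := hb.1
    have hbd : b = diagb m ((b.1 : ℕ)) ((b.1 : ℕ) - (b.2.1 : ℕ)) := by
      rw [eq_comm, diagb_eq_iff m (by omega)]
      have hv := congrArg Fin.val hdiag
      exact ⟨rfl, by omega, by omega⟩
    have hchain := diag_chain F m hcen ((m+2) - (b.1 : ℕ)) ((b.1 : ℕ))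
      ((b.1 : ℕ) - (b.2.1 : ℕ)) (by omega) (by omega)
    rw [show (b.1 : ℕ) + ((m+2) - (b.1 : ℕ)) = m+2 from by omega] at hchain
    have hterm : ∀ s ∈ Finset.range (m+3),
        Phi F m b (rho F m (Phi F m (diagb m (m+2) s) (rho F m ω) • zΩ F m ^ s))
        = if s = (b.1 : ℕ) - (b.2.1 : ℕ) then
            Phi F m (diagb m (m+2) s) (rho F m ω) else 0 := by
      intro s hsm
      rw [Finset.mem_range] at hsm
      rw [map_smul, Phi_smul, Phi_z_pow F m hb (by omega)]
      by_cases h1 : s = (b.1 : ℕ) - (b.2.1 : ℕ)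
      · rw [if_pos ⟨hdiag, h1.symm, by omega⟩, mul_one, if_pos h1]
      · rw [if_neg (fun hC => h1 hC.2.1.symm), mul_zero, if_neg h1]
    rw [Finset.sum_congr rfl hterm,
      Finset.sum_ite_eq' (Finset.range (m+3)) ((b.1 : ℕ) - (b.2.1 : ℕ)),
      if_pos (Finset.mem_range.mpr (by omega))]
    calc Phi F m b (rho F m ω)
        = Phi F m (diagb m ((b.1 : ℕ)) ((b.1 : ℕ) - (b.2.1 : ℕ))) (rho F m ω) := by
          rw [← hbd]
      _ = _ := hchain.symm
  · have hne : b.1 ≠ b.2.2 := fun h => hdiag h.symm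
    rw [offdiag_zero F m hcen hne]
    rw [eq_comm]
    refine Finset.sum_eq_zero fun s hsm => ?_
    rw [Finset.mem_range] at hsm
    rw [map_smul, Phi_smul, Phi_z_pow F m hb (by omega),
      if_neg (fun hC => hdiag hC.1), mul_zero]

/-! ### Main results -/

theorem range_eq_center :
    (Polynomial.aeval (zΩ F m)).range = Subalgebra.center F (Omega F m) := by
  apply le_antisymm
  · rw [← Algebra.adjoin_singleton_eq_range_aeval]
    exact Algebra.adjoin_le (Set.singleton_subset_iff.mpr (z_central F m))
  · intro ω hω
    rw [Subalgebra.mem_center_iff] at hω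
    rw [center_rep F m hω]
    have hzr : zΩ F m ∈ (Polynomial.aeval (zΩ F m) : Polynomial F →ₐ[F] Omega F m).range :=
      ⟨Polynomial.X, Polynomial.aeval_X (zΩ F m)⟩
    exact Subalgebra.sum_mem _ fun s _ =>
      Subalgebra.smul_mem _ (Subalgebra.pow_mem _ hzr s) _

theorem ker_eq :
    RingHom.ker ((Polynomial.aeval (zΩ F m)).toRingHom : Polynomial F →+* Omega F m)
      = Ideal.span {Polynomial.X ^ (m+3)} := by
  apply le_antisymm
  · intro q hq
    rw [RingHom.mem_ker] at hq
    have hq' : Polynomial.aeval (zΩ F m) q = 0 := hq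
    rw [Ideal.mem_span_singleton]
    have hmon : (Polynomial.X ^ (m+3) : Polynomial F).Monic := Polynomial.monic_X_pow _
    have hdiv := Polynomial.modByMonic_add_div q (Polynomial.X ^ (m+3))
    set r := q %ₘ (Polynomial.X ^ (m+3)) with hrdef
    have hr0 : Polynomial.aeval (zΩ F m) r = 0 := by
      have h := congrArg (Polynomial.aeval (zΩ F m)) hdiv
      rw [map_add, map_mul, map_pow, Polynomial.aeval_X, z_pow_p, zero_mul, add_zero, hq'] at h
      exact h
    have hdeg : r.natDegree < m+3 := by
      by_cases h0 : r = 0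
      · rw [h0, Polynomial.natDegree_zero]; omega
      · have hlt := Polynomial.degree_modByMonic_lt q hmon
        rw [Polynomial.degree_X_pow] at hlt
        exact (Polynomial.natDegree_lt_iff_degree_lt h0).mpr hlt
    have hexp := Polynomial.aeval_eq_sum_range' hdeg (zΩ F m)
    rw [hr0] at hexp
    have hcoeff : ∀ s, s < m+3 → r.coeff s = 0 := by
      intro s hs
      have h2 : Phi F m (diagb m (m+2) s)
          (rho F m (∑ i ∈ Finset.range (m+3), r.coeff i • zΩ F m ^ i)) = r.coeff s := by
        rw [map_sum, Phi_sum]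
        have hterm : ∀ i ∈ Finset.range (m+3),
            Phi F m (diagb m (m+2) s) (rho F m (r.coeff i • zΩ F m ^ i))
            = if i = s then r.coeff i else 0 := by
          intro i him
          rw [Finset.mem_range] at him
          rw [map_smul, Phi_smul, Phi_z_pow F m (diagb_good m le_rfl) (by omega)]
          have e1 : ((diagb m (m+2) s).1 : ℕ) = m+2 := fv3 m (m+2) (by omega)
          have e2 : ((diagb m (m+2) s).2.1 : ℕ) = m+2 - s := fv3 m (m+2-s) (by omega)
          by_cases h1 : i = s
          · rw [if_pos ⟨rfl, by rw [e1, e2]; omega, by rw [e1]; omega⟩, mul_one, if_pos h1]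
          · rw [if_neg ?_, mul_zero, if_neg h1]
            intro hC
            have := hC.2.1
            rw [e1, e2] at this
            omega
        rw [Finset.sum_congr rfl hterm, Finset.sum_ite_eq' (Finset.range (m+3)) s,
          if_pos (Finset.mem_range.mpr hs)]
      rw [← h2, ← hexp, map_zero, Phi_zero]
    have hr : r = 0 := by
      apply Polynomial.ext
      intro n
      rw [Polynomial.coeff_zero]
      by_cases hn : n < m+3
      · exact hcoeff n hn
      · exact Polynomial.coeff_eq_zero_of_natDegree_lt (by omega)
    refine ⟨q /ₘ (Polynomial.X ^ (m+3)), ?_⟩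
    conv_lhs => rw [← hdiv]
    rw [hr, zero_add]
  · rw [Ideal.span_le]
    intro x hx
    rw [Set.mem_singleton_iff] at hx
    subst hx
    rw [SetLike.mem_coe, RingHom.mem_ker]
    show Polynomial.aeval (zΩ F m) (Polynomial.X ^ (m+3)) = 0
    rw [map_pow, Polynomial.aeval_X, z_pow_p]

end Stmt6Proof

open Stmt6 in
theorem stmt6 (F : Type) [Field F] [IsAlgClosed F] (p m : ℕ) (hpm : p = m + 3)
    [Fact (Nat.Prime p)] [CharP F p] :
    RingHom.ker ((Polynomial.aeval (zΩ F m)).toRingHom : Polynomial F →+* Omega F m)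
      = Ideal.span {Polynomial.X ^ p} ∧
    (Polynomial.aeval (zΩ F m)).range = Subalgebra.center F (Omega F m) := by
  subst hpm
  exact ⟨Stmt6Proof.ker_eq F m, Stmt6Proof.range_eq_center F m⟩
end

section
/- Let c be the path algebra of the quiver with vertices 1,…,p and arrows η_s: s → s+1, ξ_s: s+1 → s modulo the ideal generated by η_{p−1}ξ_{p−1}, ξ_{m+1}ξ_m, η_mη_{m+1}, and ξ_mη_m + η_{m+1}ξ_{m+1} for 1 ≤ m ≤ p−2. Then the centre of c equals F·1 ⊕ c², where c² is the span of all paths of length 2. -/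
/-!
STATEMENT 7: Let `c` be the path algebra of the quiver with vertices `1, …, p` and arrows
`η_s : s → s+1`, `ξ_s : s+1 → s` modulo the ideal generated by `η_{p−1}ξ_{p−1}`,
`ξ_{m+1}ξ_m`, `η_mη_{m+1}` and `ξ_mη_m + η_{m+1}ξ_{m+1}` (`1 ≤ m ≤ p−2`).
Then the centre of `c` is `F·1 ⊕ c²`, where `c²` is the span of the paths of length two.

We present `c` by generators and relations, with `p = n + 3` (so `p > 2`); vertices are
`Fin (n+3)` and arrow indices `t : Fin (n+2)`, with `η t` running from `t.castSucc` to
`t.succ` and `ξ t` the other way.  Products are written in function-composition order, so the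
ideal generators above become (with `u = t + 1`): `ξ_u η_u` at the top vertex, `ξ_t ξ_u`,
`η_u η_t`, and `η_t ξ_t + ξ_u η_u`.
-/

namespace Stmt7

inductive CGen (n : ℕ) : Type
  | e : Fin (n + 3) → CGen n
  | h : Fin (n + 2) → CGen n   -- the arrows η
  | k : Fin (n + 2) → CGen n   -- the arrows ξ

variable (F : Type) [Field F] (n : ℕ)

open FreeAlgebra

abbrev fE (i : Fin (n + 3)) : FreeAlgebra F (CGen n) := ι F (CGen.e i)
abbrev fH (t : Fin (n + 2)) : FreeAlgebra F (CGen n) := ι F (CGen.h t)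
abbrev fK (t : Fin (n + 2)) : FreeAlgebra F (CGen n) := ι F (CGen.k t)

/-- The defining relations of `c`. -/
inductive CRel : FreeAlgebra F (CGen n) → FreeAlgebra F (CGen n) → Prop
  | ee (i j : Fin (n + 3)) :
      CRel (fE F n i * fE F n j) (if i = j then fE F n i else 0)
  | esum : CRel (∑ i : Fin (n + 3), fE F n i) 1
  /-- `η t` is an arrow from vertex `t.castSucc` to vertex `t.succ` -/
  | eh (t : Fin (n + 2)) : CRel (fE F n t.succ * fH F n t * fE F n t.castSucc) (fH F n t)
  /-- `ξ t` is an arrow from vertex `t.succ` to vertex `t.castSucc` -/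
  | ek (t : Fin (n + 2)) : CRel (fE F n t.castSucc * fK F n t * fE F n t.succ) (fK F n t)
  /-- `η_{p-1} ξ_{p-1} = 0` -/
  | top : CRel (fK F n (Fin.last (n + 1)) * fH F n (Fin.last (n + 1))) 0
  /-- `ξ_{m+1} ξ_m = 0` -/
  | kk (t : Fin (n + 1)) : CRel (fK F n t.castSucc * fK F n t.succ) 0
  /-- `η_m η_{m+1} = 0` -/
  | hh (t : Fin (n + 1)) : CRel (fH F n t.succ * fH F n t.castSucc) 0
  /-- `ξ_m η_m + η_{m+1} ξ_{m+1} = 0` -/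
  | hk (t : Fin (n + 1)) :
      CRel (fH F n t.castSucc * fK F n t.castSucc + fK F n t.succ * fH F n t.succ) 0

/-- The algebra `c`. -/
abbrev CAlg := RingQuot (CRel F n)

noncomputable def mkC : FreeAlgebra F (CGen n) →ₐ[F] CAlg F n := RingQuot.mkAlgHom F _

noncomputable def hC (t : Fin (n + 2)) : CAlg F n := mkC F n (fH F n t)
noncomputable def kC (t : Fin (n + 2)) : CAlg F n := mkC F n (fK F n t)

/-- `c²`: the span of the length-two paths (these are the loops `ξη` and `ηξ`;
all other products of two arrows vanish in `c`). -/
noncomputable def csq : Submodule F (CAlg F n) :=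
  Submodule.span F
    (Set.range (fun t => hC F n t * kC F n t) ∪ Set.range (fun t => kC F n t * hC F n t))

end Stmt7

namespace Stmt7

variable {F : Type} [Field F] {n : ℕ}

noncomputable def eC (F : Type) [Field F] (n : ℕ) (i : Fin (n + 3)) : CAlg F n :=
  mkC F n (fE F n i)

lemma mkC_rel {x y : FreeAlgebra F (CGen n)} (h : CRel F n x y) : mkC F n x = mkC F n y :=
  RingQuot.mkAlgHom_rel F h

lemma eC_mul_eC (i j : Fin (n + 3)) :
    eC F n i * eC F n j = if i = j then eC F n i else 0 := by
  have := mkC_rel (CRel.ee (F := F) (n := n) i j)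
  rwa [map_mul, apply_ite (mkC F n), map_zero] at this

lemma sum_eC : (∑ i : Fin (n + 3), eC F n i) = 1 := by
  have := mkC_rel (show CRel F n (∑ i : Fin (n + 3), fE F n i) 1 from CRel.esum)
  rwa [map_sum, map_one] at this

lemma e_h_e (t : Fin (n + 2)) :
    eC F n t.succ * hC F n t * eC F n t.castSucc = hC F n t := by
  have := mkC_rel (CRel.eh (F := F) t)
  rwa [map_mul, map_mul] at this

lemma e_k_e (t : Fin (n + 2)) :
    eC F n t.castSucc * kC F n t * eC F n t.succ = kC F n t := by
  have := mkC_rel (CRel.ek (F := F) t)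
  rwa [map_mul, map_mul] at this

lemma eC_mul_hC (i : Fin (n + 3)) (t : Fin (n + 2)) :
    eC F n i * hC F n t = if i = t.succ then hC F n t else 0 := by
  conv_lhs => rw [← e_h_e t]
  rw [← mul_assoc, ← mul_assoc, eC_mul_eC]
  split_ifs with h
  · subst h; exact e_h_e t
  · simp

lemma hC_mul_eC (t : Fin (n + 2)) (i : Fin (n + 3)) :
    hC F n t * eC F n i = if i = t.castSucc then hC F n t else 0 := by
  conv_lhs => rw [← e_h_e t]
  rw [mul_assoc, eC_mul_eC]
  split_ifs with h h2 h2
  · rw [e_h_e t]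
  · exact absurd h.symm h2
  · exact absurd h2.symm h
  · simp

lemma eC_mul_kC (i : Fin (n + 3)) (t : Fin (n + 2)) :
    eC F n i * kC F n t = if i = t.castSucc then kC F n t else 0 := by
  conv_lhs => rw [← e_k_e t]
  rw [← mul_assoc, ← mul_assoc, eC_mul_eC]
  split_ifs with h
  · subst h; exact e_k_e t
  · simp

lemma kC_mul_eC (t : Fin (n + 2)) (i : Fin (n + 3)) :
    kC F n t * eC F n i = if i = t.succ then kC F n t else 0 := by
  conv_lhs => rw [← e_k_e t]
  rw [mul_assoc, eC_mul_eC]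
  split_ifs with h h2 h2
  · rw [e_k_e t]
  · exact absurd h.symm h2
  · exact absurd h2.symm h
  · simp

lemma hC_mul_hC (s t : Fin (n + 2)) : hC F n s * hC F n t = 0 := by
  by_cases h1 : s.castSucc = t.succ
  · have hs : (s : ℕ) = (t : ℕ) + 1 := by
      simpa [Fin.ext_iff] using h1
    have ht : (t : ℕ) < n + 1 := by omega
    have e1 : t = (⟨t, ht⟩ : Fin (n + 1)).castSucc := by simp [Fin.ext_iff]
    have e2 : s = (⟨t, ht⟩ : Fin (n + 1)).succ := by simp [Fin.ext_iff, hs]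
    rw [e1, e2]
    have := mkC_rel (CRel.hh (F := F) ⟨t, ht⟩)
    rwa [map_mul, map_zero] at this
  · have h2 : eC F n t.succ * hC F n t = hC F n t := by
      rw [eC_mul_hC, if_pos rfl]
    calc hC F n s * hC F n t = hC F n s * (eC F n t.succ * hC F n t) := by rw [h2]
    _ = (hC F n s * eC F n t.succ) * hC F n t := by rw [mul_assoc]
    _ = 0 := by rw [hC_mul_eC, if_neg (fun hh => h1 hh.symm), zero_mul]

lemma kC_mul_kC (s t : Fin (n + 2)) : kC F n s * kC F n t = 0 := by
  by_cases h1 : s.succ = t.castSucc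
  · have hs : (s : ℕ) + 1 = (t : ℕ) := by simpa [Fin.ext_iff] using h1
    have ht : (s : ℕ) < n + 1 := by omega
    have e1 : s = (⟨s, ht⟩ : Fin (n + 1)).castSucc := by simp [Fin.ext_iff]
    have e2 : t = (⟨s, ht⟩ : Fin (n + 1)).succ := by simp [Fin.ext_iff, ← hs]
    rw [e1, e2]
    have := mkC_rel (CRel.kk (F := F) ⟨s, ht⟩)
    rwa [map_mul, map_zero] at this
  · have h2 : eC F n t.castSucc * kC F n t = kC F n t := by
      rw [eC_mul_kC, if_pos rfl]
    calc kC F n s * kC F n t = kC F n s * (eC F n t.castSucc * kC F n t) := by rw [h2]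
    _ = (kC F n s * eC F n t.castSucc) * kC F n t := by rw [mul_assoc]
    _ = 0 := by rw [kC_mul_eC, if_neg (fun hh => h1 hh.symm), zero_mul]

lemma hC_mul_kC_ne {s t : Fin (n + 2)} (h : s ≠ t) : hC F n s * kC F n t = 0 := by
  have h2 : eC F n t.castSucc * kC F n t = kC F n t := by rw [eC_mul_kC, if_pos rfl]
  calc hC F n s * kC F n t = (hC F n s * eC F n t.castSucc) * kC F n t := by
        rw [mul_assoc, h2]
  _ = 0 := by
        rw [hC_mul_eC, if_neg, zero_mul]
        exact fun hh => h (Fin.castSucc_injective _ hh).symm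

lemma kC_mul_hC_ne {s t : Fin (n + 2)} (h : s ≠ t) : kC F n s * hC F n t = 0 := by
  have h2 : eC F n t.succ * hC F n t = hC F n t := by rw [eC_mul_hC, if_pos rfl]
  calc kC F n s * hC F n t = (kC F n s * eC F n t.succ) * hC F n t := by
        rw [mul_assoc, h2]
  _ = 0 := by
        rw [kC_mul_eC, if_neg, zero_mul]
        exact fun hh => h (Fin.succ_injective _ hh).symm

lemma kh_last : kC F n (Fin.last (n + 1)) * hC F n (Fin.last (n + 1)) = 0 := by
  have := mkC_rel (CRel.top (F := F) (n := n))
  rwa [map_mul, map_zero] at this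

lemma hk_rel (t : Fin (n + 1)) :
    hC F n t.castSucc * kC F n t.castSucc + kC F n t.succ * hC F n t.succ = 0 := by
  have := mkC_rel (CRel.hk (F := F) t)
  rwa [map_add, map_mul, map_mul, map_zero] at this

lemma hkh (t : Fin (n + 2)) : hC F n t * kC F n t * hC F n t = 0 := by
  cases t using Fin.lastCases with
  | last => rw [mul_assoc, kh_last, mul_zero]
  | cast t0 =>
    have h1 : (hC F n t0.castSucc * kC F n t0.castSucc
        + kC F n t0.succ * hC F n t0.succ) * hC F n t0.castSucc = 0 := by
      rw [hk_rel t0, zero_mul]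
    rwa [add_mul, mul_assoc (kC F n t0.succ), hC_mul_hC, mul_zero, add_zero] at h1

lemma khk (t : Fin (n + 2)) : kC F n t * hC F n t * kC F n t = 0 := by
  cases t using Fin.lastCases with
  | last => rw [kh_last, zero_mul]
  | cast t0 =>
    have h1 : kC F n t0.castSucc * (hC F n t0.castSucc * kC F n t0.castSucc
        + kC F n t0.succ * hC F n t0.succ) = 0 := by
      rw [hk_rel t0, mul_zero]
    rwa [mul_add, ← mul_assoc, ← mul_assoc, kC_mul_kC, zero_mul, add_zero] at h1

end Stmt7
namespace Stmt7

variable {F : Type} [Field F] {n : ℕ}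

lemma hk_mul_h (t s : Fin (n + 2)) : hC F n t * kC F n t * hC F n s = 0 := by
  by_cases h : s = t
  · subst h; exact hkh s
  · rw [mul_assoc, kC_mul_hC_ne (fun hh => h hh.symm), mul_zero]

lemma hk_mul_k (t s : Fin (n + 2)) : hC F n t * kC F n t * kC F n s = 0 := by
  rw [mul_assoc, kC_mul_kC, mul_zero]

lemma kh_mul_h (t s : Fin (n + 2)) : kC F n t * hC F n t * hC F n s = 0 := by
  rw [mul_assoc, hC_mul_hC, mul_zero]

lemma kh_mul_k (t s : Fin (n + 2)) : kC F n t * hC F n t * kC F n s = 0 := by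
  by_cases h : s = t
  · subst h; exact khk s
  · rw [mul_assoc, hC_mul_kC_ne (fun hh => h hh.symm), mul_zero]

lemma h_mul_hk (s t : Fin (n + 2)) : hC F n s * (hC F n t * kC F n t) = 0 := by
  rw [← mul_assoc, hC_mul_hC, zero_mul]

lemma h_mul_kh (s t : Fin (n + 2)) : hC F n s * (kC F n t * hC F n t) = 0 := by
  by_cases h : s = t
  · subst h; rw [← mul_assoc]; exact hkh s
  · rw [← mul_assoc, hC_mul_kC_ne h, zero_mul]

lemma k_mul_hk (s t : Fin (n + 2)) : kC F n s * (hC F n t * kC F n t) = 0 := by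
  by_cases h : s = t
  · subst h; rw [← mul_assoc]; exact khk s
  · rw [← mul_assoc, kC_mul_hC_ne h, zero_mul]

lemma k_mul_kh (s t : Fin (n + 2)) : kC F n s * (kC F n t * hC F n t) = 0 := by
  rw [← mul_assoc, kC_mul_kC, zero_mul]

lemma e_mul_hk (i : Fin (n + 3)) (t : Fin (n + 2)) :
    eC F n i * (hC F n t * kC F n t) = if i = t.succ then hC F n t * kC F n t else 0 := by
  rw [← mul_assoc, eC_mul_hC]
  split_ifs <;> simp

lemma hk_mul_e (t : Fin (n + 2)) (i : Fin (n + 3)) :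
    (hC F n t * kC F n t) * eC F n i = if i = t.succ then hC F n t * kC F n t else 0 := by
  rw [mul_assoc, kC_mul_eC]
  split_ifs <;> simp

lemma e_mul_kh (i : Fin (n + 3)) (t : Fin (n + 2)) :
    eC F n i * (kC F n t * hC F n t) = if i = t.castSucc then kC F n t * hC F n t else 0 := by
  rw [← mul_assoc, eC_mul_kC]
  split_ifs <;> simp

lemma kh_mul_e (t : Fin (n + 2)) (i : Fin (n + 3)) :
    (kC F n t * hC F n t) * eC F n i = if i = t.castSucc then kC F n t * hC F n t else 0 := by
  rw [mul_assoc, hC_mul_eC]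
  split_ifs <;> simp

/-- The generators of `c` as an algebra. -/
lemma adjoin_gens_eq_top :
    Algebra.adjoin F (Set.range (fun g => mkC F n (FreeAlgebra.ι F g))) = ⊤ := by
  have h1 : Set.range (fun g => mkC F n (FreeAlgebra.ι F g))
      = mkC F n '' Set.range (FreeAlgebra.ι F) := by
    rw [← Set.range_comp]; rfl
  rw [h1, ← AlgHom.map_adjoin, FreeAlgebra.adjoin_range_ι, Algebra.map_top,
    AlgHom.range_eq_top]
  exact RingQuot.mkAlgHom_surjective F _

lemma mem_center_of_comm (x : CAlg F n)
    (he : ∀ i, eC F n i * x = x * eC F n i)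
    (hh : ∀ t, hC F n t * x = x * hC F n t)
    (hk : ∀ t, kC F n t * x = x * kC F n t) :
    x ∈ Subalgebra.center F (CAlg F n) := by
  rw [Subalgebra.mem_center_iff]
  intro b
  have hle : Algebra.adjoin F (Set.range (fun g => mkC F n (FreeAlgebra.ι F g)))
      ≤ Subalgebra.centralizer F {x} := by
    apply Algebra.adjoin_le
    rintro _ ⟨g, rfl⟩
    rw [SetLike.mem_coe, Subalgebra.mem_centralizer_iff]
    rintro y hy
    rcases hy with rfl
    cases g with
    | e i => exact (he i).symm
    | h t => exact (hh t).symm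
    | k t => exact (hk t).symm
  have hb : b ∈ Subalgebra.centralizer F {x} := by
    apply hle
    rw [adjoin_gens_eq_top]
    trivial
  exact ((Subalgebra.mem_centralizer_iff F).1 hb x rfl).symm

lemma hk_mem_center (t : Fin (n + 2)) :
    hC F n t * kC F n t ∈ Subalgebra.center F (CAlg F n) := by
  apply mem_center_of_comm
  · intro i; rw [e_mul_hk, hk_mul_e]
  · intro s; rw [h_mul_hk, hk_mul_h]
  · intro s; rw [k_mul_hk, hk_mul_k]

lemma kh_mem_center (t : Fin (n + 2)) :
    kC F n t * hC F n t ∈ Subalgebra.center F (CAlg F n) := by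
  apply mem_center_of_comm
  · intro i; rw [e_mul_kh, kh_mul_e]
  · intro s; rw [h_mul_kh, kh_mul_h]
  · intro s; rw [k_mul_kh, kh_mul_k]

lemma csq_le_center :
    csq F n ≤ Subalgebra.toSubmodule (Subalgebra.center F (CAlg F n)) := by
  rw [csq, Submodule.span_le]
  rintro x (⟨t, rfl⟩ | ⟨t, rfl⟩)
  · exact hk_mem_center t
  · exact kh_mem_center t

end Stmt7
namespace Stmt7

variable {F : Type} [Field F] {n : ℕ}

/-- A spanning set for `c`. -/
noncomputable def genSet (F : Type) [Field F] (n : ℕ) : Set (CAlg F n) :=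
  (Set.range (eC F n) ∪ Set.range (hC F n) ∪ Set.range (kC F n)) ∪
    (Set.range (fun t => hC F n t * kC F n t) ∪ Set.range (fun t => kC F n t * hC F n t))

lemma me (i : Fin (n + 3)) : eC F n i ∈ Submodule.span F (genSet F n) :=
  Submodule.subset_span (Or.inl (Or.inl (Or.inl ⟨i, rfl⟩)))

lemma mh (t : Fin (n + 2)) : hC F n t ∈ Submodule.span F (genSet F n) :=
  Submodule.subset_span (Or.inl (Or.inl (Or.inr ⟨t, rfl⟩)))

lemma mk' (t : Fin (n + 2)) : kC F n t ∈ Submodule.span F (genSet F n) :=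
  Submodule.subset_span (Or.inl (Or.inr ⟨t, rfl⟩))

lemma mhk (t : Fin (n + 2)) : hC F n t * kC F n t ∈ Submodule.span F (genSet F n) :=
  Submodule.subset_span (Or.inr (Or.inl ⟨t, rfl⟩))

lemma mkh (t : Fin (n + 2)) : kC F n t * hC F n t ∈ Submodule.span F (genSet F n) :=
  Submodule.subset_span (Or.inr (Or.inr ⟨t, rfl⟩))

lemma mul_mem_span :
    ∀ x ∈ genSet F n, ∀ y ∈ genSet F n, x * y ∈ Submodule.span F (genSet F n) := by
  rintro x (((⟨i, rfl⟩ | ⟨t, rfl⟩) | ⟨t, rfl⟩) | (⟨t, rfl⟩ | ⟨t, rfl⟩))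
    <;> rintro y (((⟨j, rfl⟩ | ⟨s, rfl⟩) | ⟨s, rfl⟩) | (⟨s, rfl⟩ | ⟨s, rfl⟩))
  -- e * _
  · rw [eC_mul_eC]; split_ifs; exacts [me i, Submodule.zero_mem _]
  · rw [eC_mul_hC]; split_ifs; exacts [mh s, Submodule.zero_mem _]
  · rw [eC_mul_kC]; split_ifs; exacts [mk' s, Submodule.zero_mem _]
  · rw [e_mul_hk]; split_ifs; exacts [mhk s, Submodule.zero_mem _]
  · rw [e_mul_kh]; split_ifs; exacts [mkh s, Submodule.zero_mem _]
  -- h * _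
  · rw [hC_mul_eC]; split_ifs; exacts [mh t, Submodule.zero_mem _]
  · rw [hC_mul_hC]; exact Submodule.zero_mem _
  · by_cases hts : t = s
    · subst hts; exact mhk t
    · rw [hC_mul_kC_ne hts]; exact Submodule.zero_mem _
  · rw [h_mul_hk]; exact Submodule.zero_mem _
  · rw [h_mul_kh]; exact Submodule.zero_mem _
  -- k * _
  · rw [kC_mul_eC]; split_ifs; exacts [mk' t, Submodule.zero_mem _]
  · by_cases hts : t = s
    · subst hts; exact mkh t
    · rw [kC_mul_hC_ne hts]; exact Submodule.zero_mem _
  · rw [kC_mul_kC]; exact Submodule.zero_mem _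
  · rw [k_mul_hk]; exact Submodule.zero_mem _
  · rw [k_mul_kh]; exact Submodule.zero_mem _
  -- (h k) * _
  · rw [hk_mul_e]; split_ifs; exacts [mhk t, Submodule.zero_mem _]
  · rw [hk_mul_h]; exact Submodule.zero_mem _
  · rw [hk_mul_k]; exact Submodule.zero_mem _
  · rw [← mul_assoc, hk_mul_h, zero_mul]; exact Submodule.zero_mem _
  · rw [← mul_assoc, hk_mul_k, zero_mul]; exact Submodule.zero_mem _
  -- (k h) * _
  · rw [kh_mul_e]; split_ifs; exacts [mkh t, Submodule.zero_mem _]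
  · rw [kh_mul_h]; exact Submodule.zero_mem _
  · rw [kh_mul_k]; exact Submodule.zero_mem _
  · rw [← mul_assoc, kh_mul_h, zero_mul]; exact Submodule.zero_mem _
  · rw [← mul_assoc, kh_mul_k, zero_mul]; exact Submodule.zero_mem _

/-- The span of the generating set, as a subalgebra. -/
noncomputable def SAlg (F : Type) [Field F] (n : ℕ) : Subalgebra F (CAlg F n) where
  carrier := Submodule.span F (genSet F n)
  add_mem' := fun ha hb => Submodule.add_mem _ ha hb
  zero_mem' := Submodule.zero_mem _
  mul_mem' := by
    intro a b ha hb
    have hmul : Submodule.span F (genSet F n) * Submodule.span F (genSet F n)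
        ≤ Submodule.span F (genSet F n) := by
      rw [Submodule.span_mul_span, Submodule.span_le]
      rintro _ ⟨x, hx, y, hy, rfl⟩
      exact mul_mem_span x hx y hy
    exact hmul (Submodule.mul_mem_mul ha hb)
  one_mem' := by
    show (1 : CAlg F n) ∈ Submodule.span F (genSet F n)
    rw [← sum_eC]
    exact Submodule.sum_mem _ fun i _ => me i
  algebraMap_mem' := by
    intro r
    show algebraMap F (CAlg F n) r ∈ Submodule.span F (genSet F n)
    rw [Algebra.algebraMap_eq_smul_one]
    refine Submodule.smul_mem _ _ ?_
    rw [← sum_eC]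
    exact Submodule.sum_mem _ fun i _ => me i

lemma span_genSet_eq_top : Submodule.span F (genSet F n) = ⊤ := by
  have hle : (⊤ : Subalgebra F (CAlg F n)) ≤ SAlg F n := by
    rw [← adjoin_gens_eq_top]
    apply Algebra.adjoin_le
    rintro _ ⟨g, rfl⟩
    cases g with
    | e i => exact me i
    | h t => exact mh t
    | k t => exact mk' t
  rw [Submodule.eq_top_iff']
  intro x
  exact hle Algebra.mem_top

end Stmt7
namespace Stmt7

variable {F : Type} [Field F] {n : ℕ}

/-- Vertex pair for the 2-dimensional representation attached to the arrow `t`. -/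
def pk (t : Fin (n + 2)) (a : Fin 2) : Fin (n + 3) :=
  if a = 0 then t.castSucc else t.succ

lemma pk_inj (t : Fin (n + 2)) : Function.Injective (pk t) := by
  intro a b hab
  have hne : t.castSucc ≠ t.succ := (show t.castSucc < t.succ from Fin.castSucc_lt_succ).ne
  fin_cases a <;> fin_cases b <;> simp_all [pk]

/-- Image of the vertex idempotents in the 2-dimensional representation. -/
noncomputable def dE (t : Fin (n + 2)) (i : Fin (n + 3)) : Matrix (Fin 2) (Fin 2) F :=
  Matrix.diagonal (fun a => if i = pk t a then 1 else 0)

lemma dE_mul (t : Fin (n + 2)) (i j : Fin (n + 3)) :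
    (dE t i : Matrix (Fin 2) (Fin 2) F) * dE t j = if i = j then dE t i else 0 := by
  simp only [dE]
  rw [Matrix.diagonal_mul_diagonal]
  split_ifs with h
  · subst h
    apply congrArg Matrix.diagonal
    funext a
    by_cases h2 : i = pk t a <;> simp [h2]
  · have hz : (fun a => (if i = pk t a then (1:F) else 0) * (if j = pk t a then 1 else 0))
        = (fun _ => (0:F)) := by
      funext a
      by_cases h1 : i = pk t a <;> by_cases h2 : j = pk t a <;>
        simp_all
    rw [hz]
    exact Matrix.diagonal_zero
  
lemma dE_sum (t : Fin (n + 2)) :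
    (∑ i : Fin (n + 3), (dE t i : Matrix (Fin 2) (Fin 2) F)) = 1 := by
  ext a b
  rw [Matrix.sum_apply]
  by_cases hab : a = b
  · subst hab
    simp [dE, Matrix.diagonal_apply, Matrix.one_apply, Finset.sum_ite_eq']
  · simp [dE, Matrix.diagonal_apply, Matrix.one_apply, hab]

lemma dE_cast (t : Fin (n + 2)) :
    (dE t t.castSucc : Matrix (Fin 2) (Fin 2) F) = Matrix.single 0 0 1 := by
  have hne : t.castSucc ≠ t.succ := (show t.castSucc < t.succ from Fin.castSucc_lt_succ).ne
  ext a b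
  fin_cases a <;> fin_cases b <;>
    simp [dE, pk, Matrix.diagonal_apply, Matrix.single, hne]

lemma dE_succ (t : Fin (n + 2)) :
    (dE t t.succ : Matrix (Fin 2) (Fin 2) F) = Matrix.single 1 1 1 := by
  have hne : t.succ ≠ t.castSucc := (show t.castSucc < t.succ from Fin.castSucc_lt_succ).ne'
  ext a b
  fin_cases a <;> fin_cases b <;>
    simp [dE, pk, Matrix.diagonal_apply, Matrix.single, hne]

lemma dE_mul_std_mul_dE (t : Fin (n + 2)) (a b : Fin 2) :
    (dE t (pk t a) : Matrix (Fin 2) (Fin 2) F) * Matrix.single a b 1 * dE t (pk t b)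
      = Matrix.single a b 1 := by
  have h1 : (dE t (pk t a) : Matrix (Fin 2) (Fin 2) F) = Matrix.single a a 1 := by
    fin_cases a
    · exact dE_cast t
    · exact dE_succ t
  have h2 : (dE t (pk t b) : Matrix (Fin 2) (Fin 2) F) = Matrix.single b b 1 := by
    fin_cases b
    · exact dE_cast t
    · exact dE_succ t
  rw [h1, h2, Matrix.single_mul_single_same, Matrix.single_mul_single_same, one_mul, one_mul]

end Stmt7
namespace Stmt7

variable {F : Type} [Field F] {n : ℕ}

open Matrix in
noncomputable def gH (t : Fin (n + 2)) : CGen n → Matrix (Fin 2) (Fin 2) F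
  | .e i => dE t i
  | .h s => if s = t then Matrix.single 1 0 1 else 0
  | .k _ => 0

lemma gH_rel (t : Fin (n + 2)) :
    ∀ ⦃x y : FreeAlgebra F (CGen n)⦄, CRel F n x y →
      FreeAlgebra.lift F (gH (F := F) t) x = FreeAlgebra.lift F (gH (F := F) t) y := by
  intro x y r
  induction r with
  | ee i j =>
    simp only [map_mul, FreeAlgebra.lift_ι_apply, apply_ite (FreeAlgebra.lift F (gH (F := F) t)),
      map_zero, gH]
    exact dE_mul t i j
  | esum =>
    simp only [map_sum, map_one, FreeAlgebra.lift_ι_apply, gH]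
    exact dE_sum t
  | eh s =>
    simp only [map_mul, FreeAlgebra.lift_ι_apply, gH]
    by_cases hst : s = t
    · subst hst
      rw [if_pos rfl]
      have := dE_mul_std_mul_dE (F := F) s 1 0
      simpa [pk] using this
    · rw [if_neg hst, mul_zero, zero_mul]
  | ek s => simp only [map_mul, FreeAlgebra.lift_ι_apply, gH, mul_zero, zero_mul]
  | top => simp only [map_mul, map_zero, FreeAlgebra.lift_ι_apply, gH, zero_mul]
  | kk s => simp only [map_mul, map_zero, FreeAlgebra.lift_ι_apply, gH, zero_mul]
  | hh s =>
    simp only [map_mul, map_zero, FreeAlgebra.lift_ι_apply, gH]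
    by_cases h1 : s.succ = t
    · by_cases h2 : s.castSucc = t
      · exact absurd (h2.trans h1.symm) (show s.castSucc < s.succ from Fin.castSucc_lt_succ).ne
      · rw [if_pos h1, if_neg h2, mul_zero]
    · rw [if_neg h1, zero_mul]
  | hk s =>
    simp only [map_add, map_mul, map_zero, FreeAlgebra.lift_ι_apply, gH, mul_zero, zero_mul,
      add_zero]

noncomputable def repH (t : Fin (n + 2)) : CAlg F n →ₐ[F] Matrix (Fin 2) (Fin 2) F :=
  RingQuot.liftAlgHom F ⟨FreeAlgebra.lift F (gH (F := F) t), gH_rel t⟩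

lemma repH_hC (t : Fin (n + 2)) :
    repH t (hC F n t) = (Matrix.single 1 0 1 : Matrix (Fin 2) (Fin 2) F) := by
  rw [hC, mkC, repH, RingQuot.liftAlgHom_mkAlgHom_apply, FreeAlgebra.lift_ι_apply]
  simp [gH]

lemma hC_ne_zero (t : Fin (n + 2)) : hC F n t ≠ 0 := by
  intro h
  have h2 := congrArg (repH t) h
  rw [repH_hC, map_zero] at h2
  have h3 := congrFun (congrFun h2 1) 0
  simp [Matrix.single] at h3

open Matrix in
noncomputable def gK (t : Fin (n + 2)) : CGen n → Matrix (Fin 2) (Fin 2) F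
  | .e i => dE t i
  | .h _ => 0
  | .k s => if s = t then Matrix.single 0 1 1 else 0

lemma gK_rel (t : Fin (n + 2)) :
    ∀ ⦃x y : FreeAlgebra F (CGen n)⦄, CRel F n x y →
      FreeAlgebra.lift F (gK (F := F) t) x = FreeAlgebra.lift F (gK (F := F) t) y := by
  intro x y r
  induction r with
  | ee i j =>
    simp only [map_mul, FreeAlgebra.lift_ι_apply, apply_ite (FreeAlgebra.lift F (gK (F := F) t)),
      map_zero, gK]
    exact dE_mul t i j
  | esum =>
    simp only [map_sum, map_one, FreeAlgebra.lift_ι_apply, gK]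
    exact dE_sum t
  | ek s =>
    simp only [map_mul, FreeAlgebra.lift_ι_apply, gK]
    by_cases hst : s = t
    · subst hst
      rw [if_pos rfl]
      have := dE_mul_std_mul_dE (F := F) s 0 1
      simpa [pk] using this
    · rw [if_neg hst, mul_zero, zero_mul]
  | eh s => simp only [map_mul, FreeAlgebra.lift_ι_apply, gK, mul_zero, zero_mul]
  | top => simp only [map_mul, map_zero, FreeAlgebra.lift_ι_apply, gK, mul_zero]
  | kk s =>
    simp only [map_mul, map_zero, FreeAlgebra.lift_ι_apply, gK]
    by_cases h1 : s.castSucc = t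
    · by_cases h2 : s.succ = t
      · exact absurd (h1.trans h2.symm) (show s.castSucc < s.succ from Fin.castSucc_lt_succ).ne
      · rw [if_pos h1, if_neg h2, mul_zero]
    · rw [if_neg h1, zero_mul]
  | hh s => simp only [map_mul, map_zero, FreeAlgebra.lift_ι_apply, gK, zero_mul]
  | hk s =>
    simp only [map_add, map_mul, map_zero, FreeAlgebra.lift_ι_apply, gK, mul_zero, zero_mul,
      add_zero]

noncomputable def repK (t : Fin (n + 2)) : CAlg F n →ₐ[F] Matrix (Fin 2) (Fin 2) F :=
  RingQuot.liftAlgHom F ⟨FreeAlgebra.lift F (gK (F := F) t), gK_rel t⟩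

lemma repK_kC (t : Fin (n + 2)) :
    repK t (kC F n t) = (Matrix.single 0 1 1 : Matrix (Fin 2) (Fin 2) F) := by
  rw [kC, mkC, repK, RingQuot.liftAlgHom_mkAlgHom_apply, FreeAlgebra.lift_ι_apply]
  simp [gK]

lemma kC_ne_zero (t : Fin (n + 2)) : kC F n t ≠ 0 := by
  intro h
  have h2 := congrArg (repK t) h
  rw [repK_kC, map_zero] at h2
  have h3 := congrFun (congrFun h2 0) 1
  simp [Matrix.single] at h3

noncomputable def g0 : CGen n → F
  | .e i => if i = 0 then 1 else 0
  | .h _ => 0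
  | .k _ => 0

lemma g0_rel :
    ∀ ⦃x y : FreeAlgebra F (CGen n)⦄, CRel F n x y →
      FreeAlgebra.lift F (g0 (F := F) (n := n)) x = FreeAlgebra.lift F (g0 (F := F) (n := n)) y := by
  intro x y r
  induction r with
  | ee i j =>
    simp only [map_mul, FreeAlgebra.lift_ι_apply, apply_ite (FreeAlgebra.lift F (g0 (F := F) (n := n))),
      map_zero, g0]
    by_cases h1 : i = 0 <;> by_cases h2 : j = 0 <;> by_cases h3 : i = j <;>
      simp_all
  | esum =>
    simp only [map_sum, map_one, FreeAlgebra.lift_ι_apply, g0]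
    rw [Finset.sum_ite_eq' Finset.univ (0 : Fin (n + 3)) (fun _ => (1:F))]
    simp
  | eh s => simp only [map_mul, FreeAlgebra.lift_ι_apply, g0, mul_zero, zero_mul]
  | ek s => simp only [map_mul, FreeAlgebra.lift_ι_apply, g0, mul_zero, zero_mul]
  | top => simp only [map_mul, map_zero, FreeAlgebra.lift_ι_apply, g0, zero_mul]
  | kk s => simp only [map_mul, map_zero, FreeAlgebra.lift_ι_apply, g0, zero_mul]
  | hh s => simp only [map_mul, map_zero, FreeAlgebra.lift_ι_apply, g0, zero_mul]
  | hk s =>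
    simp only [map_add, map_mul, map_zero, FreeAlgebra.lift_ι_apply, g0, mul_zero, zero_mul,
      add_zero]

noncomputable def rep0 : CAlg F n →ₐ[F] F :=
  RingQuot.liftAlgHom F ⟨FreeAlgebra.lift F (g0 (F := F) (n := n)), g0_rel⟩

lemma rep0_hC (t : Fin (n + 2)) : (rep0 (hC F n t) : F) = 0 := by
  rw [hC, mkC, rep0, RingQuot.liftAlgHom_mkAlgHom_apply, FreeAlgebra.lift_ι_apply]
  rfl

lemma rep0_kC (t : Fin (n + 2)) : (rep0 (kC F n t) : F) = 0 := by
  rw [kC, mkC, rep0, RingQuot.liftAlgHom_mkAlgHom_apply, FreeAlgebra.lift_ι_apply]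
  rfl

lemma rep0_csq {x : CAlg F n} (hx : x ∈ csq F n) : rep0 x = 0 := by
  have hle : csq F n ≤ LinearMap.ker (rep0 (F := F) (n := n)).toLinearMap := by
    rw [csq, Submodule.span_le]
    rintro _ (⟨t, rfl⟩ | ⟨t, rfl⟩) <;>
      simp [LinearMap.mem_ker, map_mul, rep0_hC, rep0_kC]
  exact hle hx

end Stmt7
namespace Stmt7

variable {F : Type} [Field F] {n : ℕ}

lemma eee_zero (t : Fin (n + 2)) (i : Fin (n + 3)) :
    eC F n t.succ * eC F n i * eC F n t.castSucc = 0 := by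
  rw [eC_mul_eC]
  split_ifs with h
  · rw [eC_mul_eC, if_neg (show t.castSucc < t.succ from Fin.castSucc_lt_succ).ne']
  · rw [zero_mul]

lemma eee_zero' (t : Fin (n + 2)) (i : Fin (n + 3)) :
    eC F n t.castSucc * eC F n i * eC F n t.succ = 0 := by
  rw [eC_mul_eC]
  split_ifs with h
  · rw [eC_mul_eC, if_neg (show t.castSucc < t.succ from Fin.castSucc_lt_succ).ne]
  · rw [zero_mul]

lemma ehe (t s : Fin (n + 2)) :
    eC F n t.succ * hC F n s * eC F n t.castSucc = if s = t then hC F n t else 0 := by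
  by_cases hst : s = t
  · subst hst
    rw [eC_mul_hC, if_pos rfl, hC_mul_eC, if_pos rfl, if_pos rfl]
  · rw [if_neg hst, eC_mul_hC, if_neg, zero_mul]
    exact fun hh => hst (Fin.succ_injective _ hh).symm

lemma eke_zero (t s : Fin (n + 2)) :
    eC F n t.succ * kC F n s * eC F n t.castSucc = 0 := by
  rw [eC_mul_kC]
  split_ifs with h
  · rw [kC_mul_eC, if_neg]
    intro hh
    simp only [Fin.ext_iff, Fin.val_succ, Fin.coe_castSucc] at h hh
    omega
  · rw [zero_mul]

lemma eke (t s : Fin (n + 2)) :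
    eC F n t.castSucc * kC F n s * eC F n t.succ = if s = t then kC F n t else 0 := by
  by_cases hst : s = t
  · subst hst
    rw [eC_mul_kC, if_pos rfl, kC_mul_eC, if_pos rfl, if_pos rfl]
  · rw [if_neg hst, eC_mul_kC, if_neg, zero_mul]
    exact fun hh => hst (Fin.castSucc_injective _ hh).symm

lemma ehe_zero' (t s : Fin (n + 2)) :
    eC F n t.castSucc * hC F n s * eC F n t.succ = 0 := by
  rw [eC_mul_hC]
  split_ifs with h
  · rw [hC_mul_eC, if_neg]
    intro hh
    simp only [Fin.ext_iff, Fin.val_succ, Fin.coe_castSucc] at h hh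
    omega
  · rw [zero_mul]

lemma sandwich_h (t : Fin (n + 2)) (a : Fin (n + 3) → F) (b c : Fin (n + 2) → F)
    (y : CAlg F n) (hy : y ∈ Subalgebra.center F (CAlg F n)) :
    eC F n t.succ * ((∑ i, a i • eC F n i) + (∑ s, b s • hC F n s)
      + (∑ s, c s • kC F n s) + y) * eC F n t.castSucc = b t • hC F n t := by
  have hyt : eC F n t.succ * y * eC F n t.castSucc = 0 := by
    rw [Subalgebra.mem_center_iff.1 hy (eC F n t.succ), mul_assoc, eC_mul_eC,
      if_neg (show t.castSucc < t.succ from Fin.castSucc_lt_succ).ne', mul_zero]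
  simp only [mul_add, add_mul, Finset.mul_sum, Finset.sum_mul, mul_smul_comm, smul_mul_assoc,
    eee_zero, ehe, eke_zero, hyt, smul_zero, Finset.sum_const_zero, add_zero, zero_add,
    smul_ite, Finset.sum_ite_eq', Finset.mem_univ, if_true]

lemma sandwich_k (t : Fin (n + 2)) (a : Fin (n + 3) → F) (b c : Fin (n + 2) → F)
    (y : CAlg F n) (hy : y ∈ Subalgebra.center F (CAlg F n)) :
    eC F n t.castSucc * ((∑ i, a i • eC F n i) + (∑ s, b s • hC F n s)
      + (∑ s, c s • kC F n s) + y) * eC F n t.succ = c t • kC F n t := by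
  have hyt : eC F n t.castSucc * y * eC F n t.succ = 0 := by
    rw [Subalgebra.mem_center_iff.1 hy (eC F n t.castSucc), mul_assoc, eC_mul_eC,
      if_neg (show t.castSucc < t.succ from Fin.castSucc_lt_succ).ne, mul_zero]
  simp only [mul_add, add_mul, Finset.mul_sum, Finset.sum_mul, mul_smul_comm, smul_mul_assoc,
    eee_zero', eke, ehe_zero', hyt, smul_zero, Finset.sum_const_zero, add_zero, zero_add,
    smul_ite, Finset.sum_ite_eq', Finset.mem_univ, if_true]

end Stmt7
open Stmt7 in
theorem stmt7 (F : Type) [Field F] [IsAlgClosed F] (p n : ℕ) (hpn : p = n + 3)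
    [Fact (Nat.Prime p)] [CharP F p] :
    Subalgebra.toSubmodule (Subalgebra.center F (CAlg F n))
      = Submodule.span F {(1 : CAlg F n)} ⊔ csq F n ∧
    Disjoint (Submodule.span F {(1 : CAlg F n)}) (csq F n) := by
  constructor
  · apply le_antisymm
    · intro x hx
      have hxc : x ∈ Subalgebra.center F (CAlg F n) := hx
      have hxS : x ∈ Submodule.span F (genSet F n) := by
        rw [span_genSet_eq_top]; trivial
      rw [genSet, Submodule.span_union, Submodule.span_union, Submodule.span_union] at hxS
      rw [show Submodule.span F
          (Set.range (fun t => hC F n t * kC F n t) ∪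
            Set.range (fun t => kC F n t * hC F n t)) = csq F n from rfl] at hxS
      obtain ⟨w, hw, y, hy, rfl⟩ := Submodule.mem_sup.1 hxS
      obtain ⟨w1, hw1, wk, hwk, rfl⟩ := Submodule.mem_sup.1 hw
      obtain ⟨we, hwe, wh, hwh, rfl⟩ := Submodule.mem_sup.1 hw1
      obtain ⟨a, rfl⟩ := (Submodule.mem_span_range_iff_exists_fun F).1 hwe
      obtain ⟨b, rfl⟩ := (Submodule.mem_span_range_iff_exists_fun F).1 hwh
      obtain ⟨c, rfl⟩ := (Submodule.mem_span_range_iff_exists_fun F).1 hwk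
      have hyc : y ∈ Subalgebra.center F (CAlg F n) := csq_le_center hy
      set X := (∑ i, a i • eC F n i) + (∑ s, b s • hC F n s)
          + (∑ s, c s • kC F n s) + y with hX
      have hXc : ∀ z : CAlg F n, z * X = X * z := Subalgebra.mem_center_iff.1 hxc
      -- the arrow coefficients vanish
      have hb : ∀ t, b t = 0 := by
        intro t
        have h5 : eC F n t.succ * X * eC F n t.castSucc = 0 := by
          rw [hXc (eC F n t.succ), mul_assoc, eC_mul_eC,
            if_neg (show t.castSucc < t.succ from Fin.castSucc_lt_succ).ne', mul_zero]
        have h6 := sandwich_h t a b c y hyc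
        have h7 : b t • hC F n t = 0 := h6.symm.trans h5
        exact (smul_eq_zero.1 h7).resolve_right (hC_ne_zero t)
      have hc : ∀ t, c t = 0 := by
        intro t
        have h5 : eC F n t.castSucc * X * eC F n t.succ = 0 := by
          rw [hXc (eC F n t.castSucc), mul_assoc, eC_mul_eC,
            if_neg (show t.castSucc < t.succ from Fin.castSucc_lt_succ).ne, mul_zero]
        have h6 := sandwich_k t a b c y hyc
        have h7 : c t • kC F n t = 0 := h6.symm.trans h5
        exact (smul_eq_zero.1 h7).resolve_right (kC_ne_zero t)
      have hbs : (∑ s, b s • hC F n s) = 0 :=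
        Finset.sum_eq_zero fun s _ => by rw [hb s, zero_smul]
      have hcs : (∑ s, c s • kC F n s) = 0 :=
        Finset.sum_eq_zero fun s _ => by rw [hc s, zero_smul]
      have hX2 : X = (∑ i, a i • eC F n i) + y := by
        rw [hX, hbs, hcs, add_zero, add_zero]
      -- the vertex coefficients are constant
      have ha : ∀ t : Fin (n + 2), a t.castSucc = a t.succ := by
        intro t
        have hyy : hC F n t * y = y * hC F n t :=
          Subalgebra.mem_center_iff.1 hyc (hC F n t)
        have hx' : hC F n t * X = X * hC F n t := hXc (hC F n t)
        rw [hX2, mul_add, add_mul, hyy] at hx'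
        have hL : hC F n t * (∑ i, a i • eC F n i) = a t.castSucc • hC F n t := by
          simp only [Finset.mul_sum, mul_smul_comm, hC_mul_eC, smul_ite, smul_zero,
            Finset.sum_ite_eq', Finset.mem_univ, if_true]
        have hR : (∑ i, a i • eC F n i) * hC F n t = a t.succ • hC F n t := by
          simp only [Finset.sum_mul, smul_mul_assoc, eC_mul_hC, smul_ite, smul_zero,
            Finset.sum_ite_eq', Finset.mem_univ, if_true]
        rw [hL, hR] at hx'
        have h8 := add_right_cancel hx'
        exact smul_left_injective F (hC_ne_zero t) h8
      have haa : ∀ i : Fin (n + 3), a i = a 0 := by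
        intro i
        induction i using Fin.induction with
        | zero => rfl
        | succ j ih => rw [← ha j]; exact ih
      have hsum : (∑ i, a i • eC F n i) = a 0 • (1 : CAlg F n) := by
        rw [← sum_eC, Finset.smul_sum]
        exact Finset.sum_congr rfl fun i _ => by rw [haa i]
      rw [hX2, hsum]
      exact Submodule.add_mem _
        (Submodule.mem_sup_left
          (Submodule.smul_mem _ _ (Submodule.subset_span rfl)))
        (Submodule.mem_sup_right hy)
    · apply sup_le
      · rw [Submodule.span_le]
        rintro z hz
        rcases Set.mem_singleton_iff.1 hz with rfl
        exact Subalgebra.one_mem _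
      · exact csq_le_center
  · rw [Submodule.disjoint_def]
    intro x hx1 hx2
    obtain ⟨r, rfl⟩ := Submodule.mem_span_singleton.1 hx1
    have h0 := rep0_csq hx2
    rw [map_smul, map_one, smul_eq_mul, mul_one] at h0
    rw [h0, zero_smul]
end
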